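/- arXiv:2405.18494 — 5 statements merged into one kernel-verified Lean document; each statement's English description precedes it below -/
import Mathlib

section
/- Let r ≥ 0 be an integer and let G be a finite simple graph on n vertices having exactly one vertex x of degree r+1, with every other vertex of degree r. Then the complement of G contains a matching M such that x is not covered by M and M covers at least n − n/(n−r) − 3 vertices. -/
set_option linter.unusedVariables false
set_option linter.unusedSectionVars false
set_option maxHeartbeats 1000000

open scoped Classical

namespace AuxMatch

variable {V : Type*} [Fintype V] (H : SimpleGraph V)

/-- The restriction of `H` to region `B`, as a graph on `V`. -/
def rg (B : Set V) : SimpleGraph V where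
  Adj v w := H.Adj v w ∧ v ∈ B ∧ w ∈ B
  symm := ⟨fun v w h => ⟨h.1.symm, h.2.2, h.2.1⟩⟩
  loopless := ⟨fun v h => H.irrefl h.1⟩

variable {H}

lemma rg_le_rg {B B' : Set V} (h : B ⊆ B') : rg H B ≤ rg H B' :=
  fun _ _ hadj => ⟨hadj.1, h hadj.2.1, h hadj.2.2⟩

lemma rg_le : rg H B ≤ H := fun _ _ hadj => hadj.1

/-- `C` is (the vertex set of) a connected component of `H` restricted to `B`. -/
def IsComp (H : SimpleGraph V) (B C : Set V) : Prop :=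
  C.Nonempty ∧ C ⊆ B ∧ (∀ u ∈ C, ∀ w, (rg H B).Adj u w → w ∈ C) ∧
    (∀ u ∈ C, ∀ w ∈ C, (rg H B).Reachable u w)

lemma walk_mem_of_closed {B C : Set V} (hcl : ∀ u ∈ C, ∀ w, (rg H B).Adj u w → w ∈ C)
    {u w : V} (hu : u ∈ C) (p : (rg H B).Walk u w) : w ∈ C := by
  induction p with
  | nil => exact hu
  | cons h p ih => exact ih (hcl _ hu _ h)

lemma reach_restrict {B C : Set V} (hcl : ∀ u ∈ C, ∀ w, (rg H B).Adj u w → w ∈ C)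
    {u w : V} (hu : u ∈ C) (p : (rg H B).Walk u w) : (rg H C).Reachable u w := by
  induction p with
  | nil => exact SimpleGraph.Reachable.refl _
  | cons h p ih =>
      rename_i a b c
      have hb : b ∈ C := hcl _ hu _ h
      have hadj : (rg H C).Adj a b := ⟨h.1, hu, hb⟩
      exact hadj.reachable.trans (ih hb)

/-- the component of `v` in region `B`. -/
def compOf (H : SimpleGraph V) (B : Set V) (v : V) : Set V :=
  {w | (rg H B).Reachable v w}

lemma mem_compOf_self (B : Set V) (v : V) : v ∈ compOf H B v := SimpleGraph.Reachable.refl _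

lemma isComp_compOf {B : Set V} {v : V} (hv : v ∈ B) : IsComp H B (compOf H B v) := by
  have hsub : compOf H B v ⊆ B := by
    intro w hw
    obtain ⟨p⟩ := (hw : (rg H B).Reachable v w)
    cases p with
    | nil => exact hv
    | cons h p =>
        have := walk_mem_of_closed (C := B) (fun u hu w hadj => hadj.2.2) (h.2.2) p
        exact this
  refine ⟨⟨v, mem_compOf_self B v⟩, hsub, ?_, ?_⟩
  · intro u hu w hadj
    exact (hu : (rg H B).Reachable v u).trans hadj.reachable
  · intro u hu w hw
    exact (hu : (rg H B).Reachable v u).symm.trans hw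

lemma IsComp.eq_compOf {B C : Set V} (hC : IsComp H B C) {v : V} (hv : v ∈ C) :
    C = compOf H B v := by
  ext u
  constructor
  · intro hu
    exact hC.2.2.2 v hv u hu
  · intro hu
    obtain ⟨p⟩ := (hu : (rg H B).Reachable v u)
    exact walk_mem_of_closed hC.2.2.1 hv p

lemma IsComp.eq_of_mem {B C C' : Set V} (hC : IsComp H B C) (hC' : IsComp H B C')
    {v : V} (hv : v ∈ C) (hv' : v ∈ C') : C = C' := by
  rw [hC.eq_compOf hv, hC'.eq_compOf hv']

lemma IsComp.disjoint_of_ne {B C C' : Set V} (hC : IsComp H B C) (hC' : IsComp H B C')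
    (hne : C ≠ C') : Disjoint C C' := by
  rw [Set.disjoint_left]
  intro v hv hv'
  exact hne (hC.eq_of_mem hC' hv hv')

/-- Transfer: a component of a larger region contained in a smaller region
is a component of the smaller region. -/
lemma IsComp.anti {B B' C : Set V} (hBB : B' ⊆ B) (hC : IsComp H B C) (hsub : C ⊆ B') :
    IsComp H B' C := by
  obtain ⟨hne, -, hcl, hconn⟩ := hC
  refine ⟨hne, hsub, ?_, ?_⟩
  · intro u hu w hadj
    exact hcl u hu w ⟨hadj.1, hBB hadj.2.1, hBB hadj.2.2⟩
  · intro u hu w hw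
    obtain ⟨p⟩ := hconn u hu w hw
    exact (reach_restrict hcl hu p).mono (rg_le_rg hsub)

/-- Transfer: a component of `C \ X`, where `C` is a component of `B`, is a
component of `B \ X`. -/
lemma IsComp.trans_diff {B C X E : Set V} (hC : IsComp H B C) (hE : IsComp H (C \ X) E) :
    IsComp H (B \ X) E := by
  obtain ⟨hne, hsub, hcl, hconn⟩ := hE
  refine ⟨hne, hsub.trans (Set.diff_subset_diff_left hC.2.1), ?_, ?_⟩
  · intro u hu w hadj
    have huC : u ∈ C := (hsub hu).1
    have hwC : w ∈ C := hC.2.2.1 u huC w ⟨hadj.1, (hadj.2.1).1, (hadj.2.2).1⟩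
    exact hcl u hu w ⟨hadj.1, hsub hu, hwC, hadj.2.2.2⟩
  · intro u hu w hw
    exact (hconn u hu w hw).mono (rg_le_rg (Set.diff_subset_diff_left hC.2.1))


noncomputable def ct (C : Set V) : Finset V := C.toFinite.toFinset

lemma mem_ct {C : Set V} {v : V} : v ∈ ct C ↔ v ∈ C := Set.Finite.mem_toFinset _

lemma card_ct (C : Set V) : (ct C).card = C.ncard :=
  (Set.ncard_eq_toFinset_card C C.toFinite).symm

variable (H) in
noncomputable def compFinset (B : Set V) : Finset (Set V) := (ct B).image (compOf H B)

lemma mem_compFinset {B C : Set V} : C ∈ compFinset H B ↔ IsComp H B C := by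
  constructor
  · intro h
    obtain ⟨v, hv, rfl⟩ := Finset.mem_image.mp h
    exact isComp_compOf (mem_ct.mp hv)
  · intro h
    obtain ⟨v, hv⟩ := h.1
    refine Finset.mem_image.mpr ⟨v, ?_, (h.eq_compOf hv).symm⟩
    exact mem_ct.mpr (h.2.1 hv)

lemma ct_biUnion_comps (B : Set V) :
    (compFinset H B).biUnion (fun C => ct C) = ct B := by
  ext u
  simp only [Finset.mem_biUnion, mem_ct]
  constructor
  · rintro ⟨C, hC, hu⟩
    exact (mem_compFinset.mp hC).2.1 hu
  · intro hu
    exact ⟨compOf H B u, mem_compFinset.mpr (isComp_compOf hu), mem_compOf_self B u⟩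

lemma sum_ncard_comps (B : Set V) :
    ∑ C ∈ compFinset H B, C.ncard = B.ncard := by
  rw [← card_ct B, ← ct_biUnion_comps B, Finset.card_biUnion]
  · exact Finset.sum_congr rfl (fun C _ => (card_ct C).symm)
  · intro C hC D hD hne
    have := (mem_compFinset.mp hC).disjoint_of_ne (mem_compFinset.mp hD) hne
    rw [Function.onFun, Finset.disjoint_left]
    intro a ha ha'
    exact (Set.disjoint_left.mp this) (mem_ct.mp ha) (mem_ct.mp ha')

variable (H) in
noncomputable def qq (B : Set V) : ℕ :=
  ((compFinset H B).filter (fun C => Odd C.ncard)).card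

lemma qq_parity (B : Set V) : qq H B % 2 = B.ncard % 2 := by
  rw [← sum_ncard_comps (H := H) B, qq, Finset.card_filter]
  conv_lhs => rw [Finset.sum_nat_mod]
  conv_rhs => rw [Finset.sum_nat_mod]
  congr 1
  refine Finset.sum_congr rfl (fun C _ => ?_)
  by_cases h : Odd C.ncard
  · simp [h, Nat.odd_iff.mp h]
  · simp [h, Nat.even_iff.mp (Nat.not_odd_iff_even.mp h)]

lemma odd_filter_subset {B C X : Set V} (hC : IsComp H B C) (hX : X ⊆ C) :
    (((compFinset H B).filter (fun D => Odd D.ncard)).erase C) ∪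
      ((compFinset H (C \ X)).filter (fun D => Odd D.ncard)) ⊆
      (compFinset H (B \ X)).filter (fun D => Odd D.ncard) := by
  intro D hD
  rcases Finset.mem_union.mp hD with h | h
  · obtain ⟨hne, hD'⟩ := Finset.mem_erase.mp h
    obtain ⟨hDcomp, hodd⟩ := Finset.mem_filter.mp hD'
    have hDC : Disjoint D C := (mem_compFinset.mp hDcomp).disjoint_of_ne hC hne
    refine Finset.mem_filter.mpr ⟨mem_compFinset.mpr ?_, hodd⟩
    refine (mem_compFinset.mp hDcomp).anti Set.diff_subset ?_
    intro a ha
    refine ⟨(mem_compFinset.mp hDcomp).2.1 ha, fun haX => ?_⟩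
    exact (Set.disjoint_left.mp hDC) ha (hX haX)
  · obtain ⟨hDcomp, hodd⟩ := Finset.mem_filter.mp h
    exact Finset.mem_filter.mpr
      ⟨mem_compFinset.mpr (hC.trans_diff (mem_compFinset.mp hDcomp)), hodd⟩

lemma odd_filter_disjoint {B C X : Set V} (hC : IsComp H B C) (hX : X ⊆ C) :
    Disjoint (((compFinset H B).filter (fun D => Odd D.ncard)).erase C)
      ((compFinset H (C \ X)).filter (fun D => Odd D.ncard)) := by
  rw [Finset.disjoint_left]
  intro D hD hD'
  obtain ⟨hne, hDf⟩ := Finset.mem_erase.mp hD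
  have hDcomp := mem_compFinset.mp (Finset.mem_filter.mp hDf).1
  have hDcomp' := mem_compFinset.mp (Finset.mem_filter.mp hD').1
  have hdisj : Disjoint D C := hDcomp.disjoint_of_ne hC hne
  obtain ⟨v, hv⟩ := hDcomp'.1
  exact (Set.disjoint_left.mp hdisj) hv (hDcomp'.2.1 hv).1

lemma qq_diff_ge_of_odd {B C X : Set V} (hC : IsComp H B C) (hX : X ⊆ C)
    (hodd : Odd C.ncard) : qq H B - 1 + qq H (C \ X) ≤ qq H (B \ X) := by
  have hsub := odd_filter_subset hC hX
  have hdis := odd_filter_disjoint hC hX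
  have hcard := Finset.card_le_card hsub
  rw [Finset.card_union_of_disjoint hdis] at hcard
  have hCin : C ∈ (compFinset H B).filter (fun D => Odd D.ncard) :=
    Finset.mem_filter.mpr ⟨mem_compFinset.mpr hC, hodd⟩
  have e1 : (((compFinset H B).filter (fun D => Odd D.ncard)).erase C).card
      = qq H B - 1 := Finset.card_erase_of_mem hCin
  rw [e1] at hcard
  exact hcard

lemma qq_diff_ge_of_even {B C X : Set V} (hC : IsComp H B C) (hX : X ⊆ C)
    (heven : ¬ Odd C.ncard) : qq H B + qq H (C \ X) ≤ qq H (B \ X) := by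
  have hsub := odd_filter_subset hC hX
  have hdis := odd_filter_disjoint hC hX
  have hcard := Finset.card_le_card hsub
  rw [Finset.card_union_of_disjoint hdis] at hcard
  have hCout : C ∉ (compFinset H B).filter (fun D => Odd D.ncard) := by
    intro hmem
    exact heven (Finset.mem_filter.mp hmem).2
  rw [Finset.erase_eq_of_notMem hCout] at hcard
  exact hcard


/-- `M` is a matching-graph: every vertex has at most one neighbour. -/
def IsMG (M : SimpleGraph V) : Prop := ∀ v : V, (M.neighborSet v).Subsingleton

lemma isMG_bot : IsMG (⊥ : SimpleGraph V) := by
  intro v a ha b hb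
  simp [SimpleGraph.mem_neighborSet] at ha

lemma support_subset_region {M : SimpleGraph V} {B : Set V} (h : M ≤ rg H B) :
    M.support ⊆ B := by
  intro v hv
  obtain ⟨w, hw⟩ := hv
  exact (h hw).2.1

/-- The single-edge graph on `{u, s}`. -/
def sgl (u s : V) : SimpleGraph V := SimpleGraph.fromEdgeSet {s(u, s)}

lemma sgl_adj {u s v w : V} (hne : u ≠ s) :
    (sgl u s).Adj v w ↔ (v = u ∧ w = s) ∨ (v = s ∧ w = u) := by
  simp only [sgl, SimpleGraph.fromEdgeSet_adj, Set.mem_singleton_iff, Sym2.eq, Sym2.rel_iff',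
    Prod.mk.injEq, Prod.swap_prod_mk]
  constructor
  · rintro ⟨(⟨rfl, rfl⟩ | ⟨rfl, rfl⟩), h⟩
    · exact Or.inl ⟨rfl, rfl⟩
    · exact Or.inr ⟨rfl, rfl⟩
  · rintro (⟨rfl, rfl⟩ | ⟨rfl, rfl⟩)
    · exact ⟨Or.inl ⟨rfl, rfl⟩, hne⟩
    · exact ⟨Or.inr ⟨rfl, rfl⟩, hne.symm⟩

lemma sgl_isMG {u s : V} (hne : u ≠ s) : IsMG (sgl u s) := by
  intro v a ha b hb
  simp only [SimpleGraph.mem_neighborSet, sgl_adj hne] at ha hb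
  rcases ha with ⟨rfl, rfl⟩ | ⟨rfl, rfl⟩
  · rcases hb with ⟨-, rfl⟩ | ⟨h1, -⟩
    · rfl
    · exact absurd h1 hne
  · rcases hb with ⟨h1, -⟩ | ⟨-, rfl⟩
    · exact absurd h1 hne.symm
    · rfl

lemma sgl_support {u s : V} (hne : u ≠ s) : (sgl u s).support = {u, s} := by
  ext v
  simp only [SimpleGraph.mem_support, Set.mem_insert_iff, Set.mem_singleton_iff]
  constructor
  · rintro ⟨w, hw⟩
    rcases (sgl_adj hne).mp hw with ⟨rfl, rfl⟩ | ⟨rfl, rfl⟩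
    · exact Or.inl rfl
    · exact Or.inr rfl
  · rintro (rfl | rfl)
    · exact ⟨s, (sgl_adj hne).mpr (Or.inl ⟨rfl, rfl⟩)⟩
    · exact ⟨u, (sgl_adj hne).mpr (Or.inr ⟨rfl, rfl⟩)⟩

lemma isMG_sup {M M' : SimpleGraph V} (hM : IsMG M) (hM' : IsMG M')
    (hdis : Disjoint M.support M'.support) : IsMG (M ⊔ M') := by
  intro v a ha b hb
  simp only [SimpleGraph.mem_neighborSet, SimpleGraph.sup_adj] at ha hb
  have hv : ∀ {w : V}, M.Adj v w → v ∈ M.support := fun h => ⟨_, h⟩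
  have hv' : ∀ {w : V}, M'.Adj v w → v ∈ M'.support := fun h => ⟨_, h⟩
  rcases ha with ha | ha <;> rcases hb with hb | hb
  · exact hM v ha hb
  · exact absurd (hv' hb) (fun h => Set.disjoint_left.mp hdis (hv ha) h)
  · exact absurd (hv' ha) (fun h => Set.disjoint_left.mp hdis (hv hb) h)
  · exact hM' v ha hb

lemma support_sup (M M' : SimpleGraph V) :
    (M ⊔ M').support = M.support ∪ M'.support := by
  ext v
  simp only [SimpleGraph.mem_support, SimpleGraph.sup_adj, Set.mem_union]
  constructor
  · rintro ⟨w, hw | hw⟩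
    · exact Or.inl ⟨w, hw⟩
    · exact Or.inr ⟨w, hw⟩
  · rintro (⟨w, hw⟩ | ⟨w, hw⟩)
    · exact ⟨w, Or.inl hw⟩
    · exact ⟨w, Or.inr hw⟩

lemma isMG_iSup {ι : Type*} {P : ι → SimpleGraph V} (hP : ∀ i, IsMG (P i))
    (hdis : ∀ i j, i ≠ j → Disjoint (P i).support (P j).support) :
    IsMG (⨆ i, P i) := by
  intro v a ha b hb
  simp only [SimpleGraph.mem_neighborSet, SimpleGraph.iSup_adj] at ha hb
  obtain ⟨i, hi⟩ := ha
  obtain ⟨j, hj⟩ := hb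
  by_cases hij : i = j
  · subst hij
    exact hP i v hi hj
  · exact absurd ⟨_, hj⟩ (fun h => Set.disjoint_left.mp (hdis i j hij) ⟨_, hi⟩ h)

lemma support_iSup {ι : Type*} (P : ι → SimpleGraph V) :
    (⨆ i, P i).support = ⋃ i, (P i).support := by
  ext v
  simp only [SimpleGraph.mem_support, SimpleGraph.iSup_adj, Set.mem_iUnion]
  exact ⟨fun ⟨w, i, h⟩ => ⟨i, w, h⟩, fun ⟨i, w, h⟩ => ⟨w, i, h⟩⟩

lemma ncard_iUnion {ι : Type*} [Fintype ι] (s : ι → Set V)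
    (hdis : ∀ i j, i ≠ j → Disjoint (s i) (s j)) :
    (⋃ i, s i).ncard = ∑ i, (s i).ncard := by
  rw [← card_ct (⋃ i, s i)]
  have : ct (⋃ i, s i) = Finset.univ.biUnion (fun i => ct (s i)) := by
    ext v
    simp only [mem_ct, Set.mem_iUnion, Finset.mem_biUnion, Finset.mem_univ, true_and]
  rw [this, Finset.card_biUnion]
  · exact Finset.sum_congr rfl (fun i _ => card_ct (s i))
  · intro i _ j _ hij
    rw [Function.onFun, Finset.disjoint_left]
    intro a ha ha'
    exact Set.disjoint_left.mp (hdis i j hij) (mem_ct.mp ha) (mem_ct.mp ha')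


lemma sgl_le_rg {u s : V} {A : Set V} (hadj : H.Adj u s) (hu : u ∈ A) (hs : s ∈ A) :
    sgl u s ≤ rg H A := by
  intro a b hab
  rcases (sgl_adj hadj.ne).mp hab with ⟨rfl, rfl⟩ | ⟨rfl, rfl⟩
  · exact ⟨hadj, hu, hs⟩
  · exact ⟨hadj.symm, hs, hu⟩

theorem main (H : SimpleGraph V) :
    ∀ n : ℕ, ∀ A : Set V, A.ncard ≤ n →
    ∃ M : SimpleGraph V, M ≤ rg H A ∧ IsMG M ∧
      ∃ S : Set V, S ⊆ A ∧
        (A.ncard : ℤ) - M.support.ncard ≤ (qq H (A \ S) : ℤ) - S.ncard := by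
  intro n
  induction n with
  | zero =>
      intro A hA
      refine ⟨⊥, bot_le, isMG_bot, ∅, by simp, ?_⟩
      have : A.ncard = 0 := Nat.le_zero.mp hA
      simp [this]
  | succ n ih =>
      intro A hA
      -- the objective function
      set f : Set V → ℤ := fun S => (qq H (A \ S) : ℤ) - S.ncard with hf
      -- choose a maximizer of f among subsets of A
      have h𝒮ne : (Finset.univ.filter (fun S : Set V => S ⊆ A)).Nonempty :=
        ⟨∅, Finset.mem_filter.mpr ⟨Finset.mem_univ _, Set.empty_subset A⟩⟩
      obtain ⟨S₁, hS₁mem, hS₁max⟩ :=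
        Finset.exists_max_image (Finset.univ.filter (fun S : Set V => S ⊆ A)) f h𝒮ne
      -- choose, among maximizers, one of maximal cardinality
      have h𝒯ne : ((Finset.univ.filter (fun S : Set V => S ⊆ A)).filter
          (fun S => f S = f S₁)).Nonempty := ⟨S₁, Finset.mem_filter.mpr ⟨hS₁mem, rfl⟩⟩
      obtain ⟨S₀, hS₀mem, hS₀max⟩ :=
        Finset.exists_max_image _ (fun S : Set V => S.ncard) h𝒯ne
      have hS₀A : S₀ ⊆ A := (Finset.mem_filter.mp (Finset.mem_filter.mp hS₀mem).1).2
      have hfS₀ : f S₀ = f S₁ := (Finset.mem_filter.mp hS₀mem).2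
      have hmax : ∀ S : Set V, S ⊆ A → f S ≤ f S₀ := by
        intro S hS
        rw [hfS₀]
        exact hS₁max S (Finset.mem_filter.mpr ⟨Finset.mem_univ _, hS⟩)
      have hsec : ∀ S : Set V, S ⊆ A → f S = f S₀ → S.ncard ≤ S₀.ncard := by
        intro S hS hfS
        exact hS₀max S (Finset.mem_filter.mpr
          ⟨Finset.mem_filter.mpr ⟨Finset.mem_univ _, hS⟩, hfS.trans hfS₀⟩)
      set B₀ : Set V := A \ S₀ with hB₀
      have hB₀A : B₀ ⊆ A := Set.diff_subset
      -- d ≥ 0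
      have hd0 : 0 ≤ f S₀ := by
        refine le_trans ?_ (hmax ∅ (Set.empty_subset A))
        simp only [hf, Set.diff_empty, Set.ncard_empty, Nat.cast_zero, sub_zero]
        positivity
      -- every component of B₀ is odd
      have hoddall : ∀ C ∈ compFinset H B₀, Odd C.ncard := by
        intro C hC
        by_contra heven
        have hCcomp := mem_compFinset.mp hC
        obtain ⟨v, hv⟩ := hCcomp.1
        have hvB₀ : v ∈ B₀ := hCcomp.2.1 hv
        have hq1 : 1 ≤ qq H (C \ {v}) := by
          have hpar := qq_parity (H := H) (C \ {v})
          have hc1 : (C \ {v}).ncard = C.ncard - 1 :=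
            Set.ncard_diff_singleton_of_mem hv
          have hCpos : 0 < C.ncard := (Set.ncard_pos (Set.toFinite _)).mpr ⟨v, hv⟩
          have : C.ncard % 2 = 0 := Nat.even_iff.mp (Nat.not_odd_iff_even.mp heven)
          omega
        have hkey := qq_diff_ge_of_even hCcomp (Set.singleton_subset_iff.mpr hv) heven
        have hAS' : A \ (S₀ ∪ {v}) = B₀ \ {v} := by
          rw [hB₀, Set.diff_diff]
        have hS'A : S₀ ∪ {v} ⊆ A := Set.union_subset hS₀A
          (Set.singleton_subset_iff.mpr (hB₀A hvB₀))
        have hS'card : (S₀ ∪ {v}).ncard = S₀.ncard + 1 := by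
          rw [Set.union_singleton, Set.ncard_insert_of_notMem hvB₀.2]
        have hge : f S₀ ≤ f (S₀ ∪ {v}) := by
          simp only [hf, ← hB₀, hAS', hS'card]
          push_cast
          omega
        have heq : f (S₀ ∪ {v}) = f S₀ := le_antisymm (hmax _ hS'A) hge
        have := hsec _ hS'A heq
        omega
      -- factor-critical counting property
      have hfc : ∀ C ∈ compFinset H B₀, ∀ v ∈ C, ∀ T : Set V, T ⊆ C \ {v} →
          (qq H ((C \ {v}) \ T) : ℤ) ≤ T.ncard := by
        intro C hC v hv T hT
        by_contra hlt
        push_neg at hlt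
        have hCcomp := mem_compFinset.mp hC
        have hodd := hoddall C hC
        have hTC : T.ncard + 1 ≤ C.ncard := by
          have h1 : T.ncard ≤ (C \ {v}).ncard := Set.ncard_le_ncard hT (Set.toFinite _)
          have h2 : (C \ {v}).ncard = C.ncard - 1 := Set.ncard_diff_singleton_of_mem hv
          have hCpos : 0 < C.ncard := (Set.ncard_pos (Set.toFinite _)).mpr ⟨v, hv⟩
          omega
        have hq2 : (T.ncard : ℤ) + 2 ≤ qq H ((C \ {v}) \ T) := by
          have hpar := qq_parity (H := H) ((C \ {v}) \ T)
          have hc1 : ((C \ {v}) \ T).ncard = C.ncard - 1 - T.ncard := by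
            rw [Set.ncard_diff hT, Set.ncard_diff_singleton_of_mem hv]
          have hoddc := Nat.odd_iff.mp hodd
          have : (T.ncard : ℤ) + 1 ≤ qq H ((C \ {v}) \ T) := by exact_mod_cast hlt
          have hq : T.ncard + 1 ≤ qq H ((C \ {v}) \ T) := by exact_mod_cast this
          have : qq H ((C \ {v}) \ T) % 2 = T.ncard % 2 := by omega
          have : T.ncard + 2 ≤ qq H ((C \ {v}) \ T) := by omega
          exact_mod_cast this
        set X : Set V := {v} ∪ T with hX
        have hXC : X ⊆ C := Set.union_subset (Set.singleton_subset_iff.mpr hv)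
          (hT.trans Set.diff_subset)
        have hCX : C \ X = (C \ {v}) \ T := by rw [hX, Set.diff_diff]
        have hkey := qq_diff_ge_of_odd hCcomp hXC hodd
        rw [hCX] at hkey
        have hXB₀ : X ⊆ B₀ := hXC.trans hCcomp.2.1
        have hAS' : A \ (S₀ ∪ X) = B₀ \ X := by rw [hB₀, Set.diff_diff]
        have hS'A : S₀ ∪ X ⊆ A := Set.union_subset hS₀A (hXB₀.trans hB₀A)
        have hXcard : X.ncard = T.ncard + 1 := by
          rw [hX, Set.union_comm, Set.union_singleton, Set.ncard_insert_of_notMem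
            (fun hvT => (hT hvT).2 rfl)]
        have hS'card : (S₀ ∪ X).ncard = S₀.ncard + T.ncard + 1 := by
          have hdisj : Disjoint S₀ X := Set.disjoint_of_subset_right hXB₀
            (Set.disjoint_left.mpr (fun a ha hb => hb.2 ha))
          rw [Set.ncard_union_eq hdisj, hXcard]
          omega
        have hq3 : 1 ≤ qq H B₀ := by
          -- C is an odd component of B₀
          have : C ∈ (compFinset H B₀).filter (fun D => Odd D.ncard) :=
            Finset.mem_filter.mpr ⟨hC, hodd⟩
          have := Finset.card_pos.mpr ⟨C, this⟩
          exact this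
        have hge : f S₀ ≤ f (S₀ ∪ X) := by
          simp only [hf, ← hB₀, hAS', hS'card]
          push_cast
          omega
        have heq : f (S₀ ∪ X) = f S₀ := le_antisymm (hmax _ hS'A) hge
        have := hsec _ hS'A heq
        omega
      -- perfect matchings on C \ {v}
      have hpm : ∀ C ∈ compFinset H B₀, ∀ v ∈ C,
          ∃ M : SimpleGraph V, M ≤ rg H (C \ {v}) ∧ IsMG M ∧ M.support = C \ {v} := by
        intro C hC v hv
        have hCA : C ⊆ A := (mem_compFinset.mp hC).2.1.trans hB₀A
        have hsize : (C \ {v}).ncard ≤ n := by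
          have h1 : (C \ {v}).ncard = C.ncard - 1 := Set.ncard_diff_singleton_of_mem hv
          have h2 : C.ncard ≤ A.ncard := Set.ncard_le_ncard hCA (Set.toFinite _)
          have hCpos : 0 < C.ncard := (Set.ncard_pos (Set.toFinite _)).mpr ⟨v, hv⟩
          omega
        obtain ⟨M, hle, hmg, S, hSsub, hbound⟩ := ih (C \ {v}) hsize
        have hqS := hfc C hC v hv S hSsub
        have hsupp : M.support ⊆ C \ {v} := support_subset_region hle
        have hcard : (C \ {v}).ncard ≤ M.support.ncard := by
          have : (S.ncard : ℤ) ≤ S.ncard := le_refl _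
          omega
        exact ⟨M, hle, hmg, Set.eq_of_subset_of_ncard_le hsupp hcard (Set.toFinite _)⟩
      -- ======== Hall assignment and assembly ========
      set D : ℕ := (f S₀).toNat with hD
      have hDf : (D : ℤ) = f S₀ := Int.toNat_of_nonneg hd0
      have hfB : f S₀ = (qq H B₀ : ℤ) - S₀.ncard := rfl
      have hqd : (qq H B₀ : ℤ) = (S₀.ncard : ℤ) + D := by omega
      set cF : Finset (Set V) := compFinset H B₀ with hcF
      set NS : Set V → Finset V :=
        (fun C => (ct S₀).filter (fun s => ∃ u ∈ C, H.Adj u s)) with hNS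
      set t : {C // C ∈ cF} → Finset (V ⊕ Fin D) :=
        (fun C => ((NS C.1).image Sum.inl) ∪ (Finset.univ.image Sum.inr)) with ht
      have hNSsub : ∀ C : Set V, ↑(NS C) ⊆ S₀ := by
        intro C a ha
        exact mem_ct.mp (Finset.mem_filter.mp ha).1
      have hall : ∀ s : Finset {C // C ∈ cF}, s.card ≤ (s.biUnion t).card := by
        intro s
        rcases s.eq_empty_or_nonempty with rfl | hsne
        · simp
        have hbU : s.biUnion t = ((s.biUnion (fun C => NS C.1)).image Sum.inl)
            ∪ ((Finset.univ : Finset (Fin D)).image Sum.inr) := by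
          ext z
          constructor
          · intro h
            obtain ⟨C, hCs, hz⟩ := Finset.mem_biUnion.mp h
            rcases Finset.mem_union.mp hz with h' | h'
            · obtain ⟨a, ha, rfl⟩ := Finset.mem_image.mp h'
              exact Finset.mem_union_left _
                (Finset.mem_image.mpr ⟨a, Finset.mem_biUnion.mpr ⟨C, hCs, ha⟩, rfl⟩)
            · exact Finset.mem_union_right _ h'
          · intro h
            rcases Finset.mem_union.mp h with h' | h'
            · obtain ⟨a, ha, rfl⟩ := Finset.mem_image.mp h'
              obtain ⟨C, hCs, haC⟩ := Finset.mem_biUnion.mp ha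
              exact Finset.mem_biUnion.mpr
                ⟨C, hCs, Finset.mem_union_left _ (Finset.mem_image.mpr ⟨a, haC, rfl⟩)⟩
            · obtain ⟨C, hCs⟩ := hsne
              exact Finset.mem_biUnion.mpr ⟨C, hCs, Finset.mem_union_right _ h'⟩
        rw [hbU, Finset.card_union_of_disjoint (Finset.disjoint_left.mpr (by
          rintro z hz1 hz2
          obtain ⟨a, -, rfl⟩ := Finset.mem_image.mp hz1
          obtain ⟨b, -, hb⟩ := Finset.mem_image.mp hz2
          exact Sum.inr_ne_inl hb)), Finset.card_image_of_injective _ Sum.inl_injective,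
          Finset.card_image_of_injective _ Sum.inr_injective, Finset.card_univ,
          Fintype.card_fin]
        -- main Hall estimate
        by_contra hlt
        push_neg at hlt
        set S' : Set V := ↑(s.biUnion (fun C => NS C.1)) with hS'
        have hS'S₀ : S' ⊆ S₀ := by
          intro a ha
          obtain ⟨C, hCs, haC⟩ := Finset.mem_biUnion.mp ha
          exact hNSsub C.1 haC
        have hS'A : S' ⊆ A := hS'S₀.trans hS₀A
        have hclaim : ∀ C : {C // C ∈ cF}, C ∈ s →
            C.1 ∈ (compFinset H (A \ S')).filter (fun E => Odd E.ncard) := by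
          intro C hmem
          have hCcomp := mem_compFinset.mp C.2
          refine Finset.mem_filter.mpr ⟨mem_compFinset.mpr ?_, hoddall C.1 C.2⟩
          have hCB : C.1 ⊆ B₀ := hCcomp.2.1
          have hCsub : C.1 ⊆ A \ S' := fun a ha =>
            ⟨hB₀A (hCB ha), fun haS' => (hCB ha).2 (hS'S₀ haS')⟩
          refine ⟨hCcomp.1, hCsub, ?_, ?_⟩
          · intro u hu w hadj
            by_cases hwS : w ∈ S₀
            · exfalso
              have h1 : w ∈ NS C.1 :=
                Finset.mem_filter.mpr ⟨mem_ct.mpr hwS, ⟨u, hu, hadj.1⟩⟩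
              have h2 : w ∈ s.biUnion (fun C => NS C.1) :=
                Finset.mem_biUnion.mpr ⟨C, hmem, h1⟩
              exact (hadj.2.2).2 h2
            · have : (rg H B₀).Adj u w := ⟨hadj.1, hCB hu, ⟨(hadj.2.2).1, hwS⟩⟩
              exact hCcomp.2.2.1 u hu w this
          · intro u hu w hw
            obtain ⟨p⟩ := hCcomp.2.2.2 u hu w hw
            exact (reach_restrict hCcomp.2.2.1 hu p).mono (rg_le_rg hCsub)
        have himage : s.image (fun C => C.1) ⊆
            (compFinset H (A \ S')).filter (fun E => Odd E.ncard) := by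
          intro E hE
          obtain ⟨C, hCs, rfl⟩ := Finset.mem_image.mp hE
          exact hclaim C hCs
        have hcard1 : s.card ≤ qq H (A \ S') := by
          rw [← Finset.card_image_of_injective s (Subtype.val_injective)]
          exact Finset.card_le_card himage
        have hfS' : f S' ≤ f S₀ := hmax S' hS'A
        have hS'card : S'.ncard = (s.biUnion (fun C => NS C.1)).card :=
          Set.ncard_coe_finset _
        simp only [hf] at hfS'
        have hd0' : (0:ℤ) ≤ (qq H (A \ S₀) : ℤ) - (S₀.ncard : ℤ) := hd0
        have hDq : (D : ℤ) = (qq H (A \ S₀) : ℤ) - (S₀.ncard : ℤ) := hDf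
        omega
      obtain ⟨F, hFinj, hFmem⟩ :=
        (Finset.all_card_le_biUnion_card_iff_exists_injective t).mp hall
      -- build the pieces
      have hpiece : ∀ C : {C // C ∈ cF}, ∃ P : SimpleGraph V,
          IsMG P ∧ P ≤ rg H A ∧
          ((∃ sv : V, F C = Sum.inl sv ∧ sv ∈ S₀ ∧ sv ∉ C.1 ∧
              P.support = C.1 ∪ {sv}) ∨
           ((∀ sv : V, F C ≠ Sum.inl sv) ∧ ∃ vC ∈ C.1, P.support = C.1 \ {vC})) := by
        intro C
        have hC := C.2
        have hCcomp := mem_compFinset.mp hC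
        have hCA : C.1 ⊆ A := hCcomp.2.1.trans hB₀A
        cases hFC : F C with
        | inl sv =>
            have hsv : Sum.inl sv ∈ t C := hFC ▸ hFmem C
            have hsvNS : sv ∈ NS C.1 := by
              rcases Finset.mem_union.mp hsv with h | h
              · obtain ⟨a, ha, haa⟩ := Finset.mem_image.mp h
                cases haa
                exact ha
              · obtain ⟨a, -, haa⟩ := Finset.mem_image.mp h
                exact absurd haa Sum.inr_ne_inl
            obtain ⟨hsvS₀', u, hu, hadj⟩ := Finset.mem_filter.mp hsvNS
            have hsvS₀ : sv ∈ S₀ := mem_ct.mp hsvS₀'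
            have hsvC : sv ∉ C.1 := fun h => (hCcomp.2.1 h).2 hsvS₀
            obtain ⟨Mc, hMle, hMmg, hMsupp⟩ := hpm C.1 hC u hu
            have hune : u ≠ sv := hadj.ne
            refine ⟨sgl u sv ⊔ Mc, ?_, ?_, Or.inl ⟨sv, rfl, hsvS₀, hsvC, ?_⟩⟩
            · refine isMG_sup (sgl_isMG hune) hMmg ?_
              rw [sgl_support hune, hMsupp, Set.disjoint_left]
              rintro a (rfl | rfl)
              · exact fun h => h.2 rfl
              · exact fun h => hsvC h.1
            · exact sup_le (sgl_le_rg hadj (hCA hu) (hS₀A hsvS₀))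
                (hMle.trans (rg_le_rg (fun a ha => hCA ha.1)))
            · rw [support_sup, sgl_support hune, hMsupp]
              ext a
              simp only [Set.mem_union, Set.mem_insert_iff, Set.mem_singleton_iff,
                Set.mem_diff]
              constructor
              · rintro ((rfl | rfl) | ⟨h, -⟩)
                · exact Or.inl hu
                · exact Or.inr rfl
                · exact Or.inl h
              · rintro (h | rfl)
                · by_cases hau : a = u
                  · exact Or.inl (Or.inl hau)
                  · exact Or.inr ⟨h, hau⟩
                · exact Or.inl (Or.inr rfl)
        | inr dd =>
            obtain ⟨v, hv⟩ := hCcomp.1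
            obtain ⟨Mc, hMle, hMmg, hMsupp⟩ := hpm C.1 hC v hv
            exact ⟨Mc, hMmg, hMle.trans (rg_le_rg (fun a ha => hCA ha.1)),
              Or.inr ⟨fun sv h => Sum.inr_ne_inl h, v, hv, hMsupp⟩⟩
      choose P hPmg hPle hPspec using hpiece
      have hmemsup : ∀ (C : {C // C ∈ cF}) (a : V), a ∈ (P C).support →
          a ∈ C.1 ∨ (a ∈ S₀ ∧ ∃ sv, F C = Sum.inl sv ∧ a = sv) := by
        intro C a ha
        rcases hPspec C with ⟨sv, hF, hsvS₀, hsvC, hsupp⟩ | ⟨-, v, hv, hsupp⟩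
        · rw [hsupp] at ha
          rcases ha with h | h
          · exact Or.inl h
          · exact Or.inr ⟨h ▸ hsvS₀, sv, hF, h⟩
        · rw [hsupp] at ha
          exact Or.inl ha.1
      have hdisj : ∀ C C' : {C // C ∈ cF}, C ≠ C' →
          Disjoint (P C).support (P C').support := by
        intro C C' hne
        have hCC' : Disjoint C.1 C'.1 :=
          (mem_compFinset.mp C.2).disjoint_of_ne (mem_compFinset.mp C'.2)
            (fun h => hne (Subtype.ext h))
        rw [Set.disjoint_left]
        intro a haC haC'
        rcases hmemsup C a haC with h1 | ⟨h1S, sv, hFsv, rfl⟩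
        · rcases hmemsup C' a haC' with h2 | ⟨h2S, sv', hFsv', rfl⟩
          · exact Set.disjoint_left.mp hCC' h1 h2
          · exact ((mem_compFinset.mp C.2).2.1 h1).2 h2S
        · rcases hmemsup C' a haC' with h2 | ⟨h2S, sv', hFsv', heq⟩
          · exact ((mem_compFinset.mp C'.2).2.1 h2).2 h1S
          · exact hne (hFinj (by rw [hFsv, hFsv', heq]))
      refine ⟨⨆ C, P C, iSup_le hPle, isMG_iSup hPmg hdisj, S₀, hS₀A, ?_⟩
      -- cardinality bookkeeping
      set mF : Finset {C // C ∈ cF} :=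
        Finset.univ.filter (fun C => ∃ sv, F C = Sum.inl sv) with hmF
      have hsupcard : ∀ C : {C // C ∈ cF}, ((P C).support.ncard : ℤ) =
          (C.1.ncard : ℤ) + (if C ∈ mF then 1 else -1) := by
        intro C
        rcases hPspec C with ⟨sv, hF, hsvS₀, hsvC, hsupp⟩ | ⟨hnot, v, hv, hsupp⟩
        · rw [if_pos (Finset.mem_filter.mpr ⟨Finset.mem_univ _, sv, hF⟩), hsupp,
            Set.union_singleton, Set.ncard_insert_of_notMem hsvC]
          push_cast
          ring
        · rw [if_neg (fun hmem => by
            obtain ⟨sv, h⟩ := (Finset.mem_filter.mp hmem).2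
            exact hnot sv h), hsupp, Set.ncard_diff_singleton_of_mem hv]
          have hpos : 0 < C.1.ncard := (Set.ncard_pos (Set.toFinite _)).mpr ⟨v, hv⟩
          omega
      have hsupuni : (⨆ C, P C).support = ⋃ C, (P C).support := support_iSup P
      have hcardsum : ((⨆ C, P C).support.ncard : ℤ) =
          ∑ C : {C // C ∈ cF}, ((P C).support.ncard : ℤ) := by
        rw [hsupuni, ncard_iUnion _ hdisj]
        push_cast
        rfl
      have hsum1 : ∑ C : {C // C ∈ cF}, ((C.1.ncard : ℤ)) = (B₀.ncard : ℤ) := by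
        have h1 : ∑ C : {C // C ∈ cF}, ((C.1.ncard : ℤ)) =
            ∑ C ∈ cF, ((C.ncard : ℤ)) := Finset.sum_coe_sort cF (fun C => (C.ncard : ℤ))
        rw [h1, ← Nat.cast_sum]
        rw [sum_ncard_comps (H := H) B₀]
      have hsum2 : ∑ C : {C // C ∈ cF}, (if C ∈ mF then (1:ℤ) else -1) =
          (mF.card : ℤ) - ((Finset.univ \ mF).card : ℤ) := by
        have h1 : Finset.univ.filter (fun C => C ∈ mF) = mF := by
          ext C
          simp
        have h2 : Finset.univ.filter (fun C => C ∉ mF) = Finset.univ \ mF := by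
          ext C
          simp
        rw [Finset.sum_ite, h1, h2, Finset.sum_const, Finset.sum_const,
          nsmul_eq_mul, nsmul_eq_mul, mul_one, mul_neg_one]
        ring
      have hfinal : ∑ C : {C // C ∈ cF}, ((P C).support.ncard : ℤ) =
          (B₀.ncard : ℤ) + (mF.card : ℤ) - ((Finset.univ \ mF).card : ℤ) := by
        rw [Finset.sum_congr rfl (fun C _ => hsupcard C), Finset.sum_add_distrib,
          hsum1, hsum2]
        ring
      have huD : (Finset.univ \ mF).card ≤ D := by
        have h0 : (Finset.univ \ mF).card = ((Finset.univ \ mF).image F).card :=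
          (Finset.card_image_of_injective _ hFinj).symm
        have hsub : (Finset.univ \ mF).image F ⊆
            (Finset.univ : Finset (Fin D)).image Sum.inr := by
          intro z hz
          obtain ⟨C, hC, rfl⟩ := Finset.mem_image.mp hz
          have hC' : ¬ ∃ sv, F C = Sum.inl sv := by
            have := (Finset.mem_sdiff.mp hC).2
            simpa [hmF] using this
          cases hFC : F C with
          | inl sv => exact absurd ⟨sv, hFC⟩ hC'
          | inr dd => exact Finset.mem_image.mpr ⟨dd, Finset.mem_univ _, rfl⟩
        calc (Finset.univ \ mF).card = ((Finset.univ \ mF).image F).card := h0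
          _ ≤ ((Finset.univ : Finset (Fin D)).image Sum.inr).card := Finset.card_le_card hsub
          _ ≤ (Finset.univ : Finset (Fin D)).card := Finset.card_image_le
          _ = D := by rw [Finset.card_univ, Fintype.card_fin]
      have hqhat : qq H B₀ = cF.card := by
        rw [qq, Finset.filter_true_of_mem]
        intro C hC
        exact hoddall C hC
      have hcount : mF.card + (Finset.univ \ mF).card = cF.card := by
        have h1 : mF.card ≤ (Finset.univ : Finset {C // C ∈ cF}).card :=
          Finset.card_le_card (Finset.subset_univ mF)
        rw [Finset.card_sdiff_of_subset (Finset.subset_univ mF), Finset.card_univ, Fintype.card_coe]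
        rw [Finset.card_univ, Fintype.card_coe] at h1
        omega
      have hAcard : A.ncard = S₀.ncard + B₀.ncard := by
        have h1 : B₀.ncard = A.ncard - S₀.ncard := by
          rw [hB₀]
          exact Set.ncard_diff hS₀A
        have h2 : S₀.ncard ≤ A.ncard := Set.ncard_le_ncard hS₀A (Set.toFinite _)
        omega
      rw [← hB₀, hcardsum, hfinal]
      omega




lemma aux_sk {s k : ℕ} (h1 : 1 ≤ s) (h2 : s < k) : k - 1 ≤ s * (k - s) := by
  have h3 : s ≤ k := le_of_lt h2
  have h4 : 1 ≤ k := le_trans h1 h3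
  zify [h3, h4]
  nlinarith [mul_nonneg (by push_cast; omega : (0:ℤ) ≤ (s:ℤ) - 1)
    (by push_cast; omega : (0:ℤ) ≤ (k:ℤ) - 1 - (s:ℤ))]

lemma compl_neighborSet (G : SimpleGraph V) (v : V) :
    (Gᶜ.neighborSet v) = (insert v (G.neighborSet v))ᶜ := by
  ext w
  simp only [SimpleGraph.mem_neighborSet, SimpleGraph.compl_adj, Set.mem_compl_iff,
    Set.mem_insert_iff]
  constructor
  · rintro ⟨h1, h2⟩ (rfl | h3)
    · exact h1 rfl
    · exact h2 h3
  · intro h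
    exact ⟨fun e => h (Or.inl e.symm), fun hadj => h (Or.inr hadj)⟩

lemma compl_deg (G : SimpleGraph V) (v : V) :
    (Gᶜ.neighborSet v).ncard = Fintype.card V - 1 - (G.neighborSet v).ncard ∧
      (G.neighborSet v).ncard + 1 ≤ Fintype.card V := by
  have hnm : v ∉ G.neighborSet v := fun h => G.irrefl h
  have h1 : (insert v (G.neighborSet v)).ncard = (G.neighborSet v).ncard + 1 :=
    Set.ncard_insert_of_notMem hnm
  have h2 := Set.ncard_add_ncard_compl (insert v (G.neighborSet v))
  rw [Nat.card_eq_fintype_card] at h2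
  constructor
  · rw [compl_neighborSet]
    omega
  · omega

end AuxMatch

open AuxMatch

/-- The degree of a vertex, defined via `Set.ncard` of the neighbour set. -/
noncomputable def degr {V : Type*} (G : SimpleGraph V) (v : V) : ℕ :=
  (G.neighborSet v).ncard

/-- A matching is formalised as a subgraph `M` of the complement `Gᶜ`
satisfying `M.IsMatching`; the vertices it covers are `M.verts`. -/
theorem matching_in_complement_of_almost_regular
    (V : Type*) [Fintype V] (G : SimpleGraph V) (r : ℕ) (x : V)
    (hx : degr G x = r + 1) (hother : ∀ v : V, v ≠ x → degr G v = r) :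
    ∃ M : SimpleGraph.Subgraph Gᶜ, M.IsMatching ∧ x ∉ M.verts ∧
      (Fintype.card V : ℝ) - (Fintype.card V : ℝ) / ((Fintype.card V : ℝ) - (r : ℝ)) - 3 ≤
        (M.verts.ncard : ℝ) := by
  classical
  set n := Fintype.card V with hn
  -- basic degree facts in the complement
  have hxdeg := compl_deg G x
  have hr2 : r + 2 ≤ n := by
    have := hxdeg.2
    rw [degr] at hx
    omega
  set k := n - r with hk
  have hk2 : 2 ≤ k := by omega
  have hdegx : (Gᶜ.neighborSet x).ncard = k - 2 := by
    rw [hxdeg.1, ← degr, hx]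
    omega
  have hdegv : ∀ v : V, v ≠ x → (Gᶜ.neighborSet v).ncard = k - 1 := by
    intro v hv
    rw [(compl_deg G v).1, ← degr, hother v hv]
    omega
  -- apply the main theorem
  set A : Set V := {x}ᶜ with hA
  have hAcard : A.ncard = n - 1 := by
    have h2 := Set.ncard_add_ncard_compl ({x} : Set V)
    rw [Nat.card_eq_fintype_card, Set.ncard_singleton] at h2
    rw [hA, hn]
    omega
  obtain ⟨M, hle, hMG, S, hSA, hbound⟩ := main Gᶜ A.ncard A le_rfl
  have hxS : x ∉ S := fun h => hSA h rfl
  set B : Set V := A \ S with hB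
  set t := S.ncard with ht
  have htn : t ≤ n - 1 := by
    rw [ht, ← hAcard]
    exact Set.ncard_le_ncard hSA (Set.toFinite _)
  have hBcard : B.ncard = n - 1 - t := by
    rw [hB, Set.ncard_diff hSA, hAcard]
  -- counting components
  set cps := compFinset Gᶜ B with hcps
  set SX : Finset V := ct (insert x S) with hSX
  set cnt : V → ℕ := fun v => (SX.filter (fun w => Gᶜ.Adj v w)).card with hcnt
  -- per-vertex estimate
  have hpv : ∀ C ∈ cps, ∀ v ∈ C, k - C.ncard ≤ cnt v := by
    intro C hC v hv
    have hCcomp := mem_compFinset.mp hC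
    have hvB : v ∈ B := hCcomp.2.1 hv
    have hvx : v ≠ x := fun h => (hvB.1) (h ▸ rfl)
    have hdeg : (Gᶜ.neighborSet v).ncard = k - 1 := hdegv v hvx
    have hsplit : Gᶜ.neighborSet v ⊆
        (C \ {v}) ∪ ((Gᶜ.neighborSet v) ∩ insert x S) := by
      intro w hw
      by_cases hwB : w ∈ B
      · have : (rg Gᶜ B).Adj v w := ⟨hw, hvB, hwB⟩
        exact Or.inl ⟨hCcomp.2.2.1 v hv w this, fun he => (Gᶜ.ne_of_adj hw) he.symm⟩
      · right
        refine ⟨hw, ?_⟩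
        by_cases hwx : w = x
        · exact Or.inl hwx
        · right
          by_contra hwS
          exact hwB ⟨hwx, hwS⟩
    have hcnteq : ((Gᶜ.neighborSet v) ∩ insert x S).ncard = cnt v := by
      rw [← card_ct]
      congr 1
      ext w
      simp only [mem_ct, Set.mem_inter_iff, Finset.mem_filter, hSX,
        SimpleGraph.mem_neighborSet]
      tauto
    have h1 : (Gᶜ.neighborSet v).ncard ≤
        (C \ {v}).ncard + ((Gᶜ.neighborSet v) ∩ insert x S).ncard :=
      le_trans (Set.ncard_le_ncard hsplit (Set.toFinite _)) (Set.ncard_union_le _ _)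
    have h2 : (C \ {v}).ncard = C.ncard - 1 := Set.ncard_diff_singleton_of_mem hv
    have h3 : 0 < C.ncard := (Set.ncard_pos (Set.toFinite _)).mpr ⟨v, hv⟩
    omega
  -- per-component estimate for small components
  have hpc : ∀ C ∈ cps, C.ncard < k → k - 1 ≤ ∑ v ∈ ct C, cnt v := by
    intro C hC hsmall
    have hCcomp := mem_compFinset.mp hC
    obtain ⟨v₀, hv₀⟩ := hCcomp.1
    have h1 : 1 ≤ C.ncard := (Set.ncard_pos (Set.toFinite _)).mpr ⟨v₀, hv₀⟩
    have h2 : (ct C).card • (k - C.ncard) ≤ ∑ v ∈ ct C, cnt v :=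
      Finset.card_nsmul_le_sum _ _ _ (fun v hv => hpv C hC v (mem_ct.mp hv))
    rw [card_ct, smul_eq_mul] at h2
    exact le_trans (aux_sk h1 hsmall) h2
  -- global double counting
  have hglobal : ∑ v ∈ ct B, cnt v ≤ t * (k - 1) + (k - 2) := by
    have hswap : ∑ v ∈ ct B, cnt v =
        ∑ w ∈ SX, ((ct B).filter (fun v => Gᶜ.Adj v w)).card := by
      simp only [hcnt, Finset.card_filter]
      rw [Finset.sum_comm]
    rw [hswap]
    have hinner : ∀ w ∈ SX, ((ct B).filter (fun v => Gᶜ.Adj v w)).card ≤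
        (Gᶜ.neighborSet w).ncard := by
      intro w hw
      rw [← card_ct]
      apply Finset.card_le_card
      intro v hv
      obtain ⟨-, hadj⟩ := Finset.mem_filter.mp hv
      exact mem_ct.mpr (hadj.symm)
    have hSXi : SX = insert x (ct S) := by
      ext w
      simp only [hSX, mem_ct, Set.mem_insert_iff, Finset.mem_insert]
    have hxnot : x ∉ ct S := fun h => hxS (mem_ct.mp h)
    calc ∑ w ∈ SX, ((ct B).filter (fun v => Gᶜ.Adj v w)).card
        ≤ ∑ w ∈ SX, (Gᶜ.neighborSet w).ncard := Finset.sum_le_sum hinner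
      _ = (Gᶜ.neighborSet x).ncard + ∑ w ∈ ct S, (Gᶜ.neighborSet w).ncard := by
          rw [hSXi, Finset.sum_insert hxnot]
      _ = (k - 2) + ∑ w ∈ ct S, (k - 1) := by
          rw [hdegx]
          congr 1
          refine Finset.sum_congr rfl (fun w hw => ?_)
          exact hdegv w (fun he => hxS (he ▸ mem_ct.mp hw))
      _ = (k - 2) + t * (k - 1) := by
          rw [Finset.sum_const, smul_eq_mul, card_ct]
      _ = t * (k - 1) + (k - 2) := by ring
  -- small components
  set small := cps.filter (fun C => C.ncard < k) with hsmalldef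
  set big := cps.filter (fun C => ¬ C.ncard < k) with hbigdef
  have hsmallcard : small.card ≤ t := by
    have hdisjc : ∀ C ∈ small, ∀ C' ∈ small, C ≠ C' → Disjoint (ct C) (ct C') := by
      intro C hC C' hC' hne
      have := (mem_compFinset.mp (Finset.mem_filter.mp hC).1).disjoint_of_ne
        (mem_compFinset.mp (Finset.mem_filter.mp hC').1) hne
      rw [Finset.disjoint_left]
      intro a ha ha'
      exact Set.disjoint_left.mp this (mem_ct.mp ha) (mem_ct.mp ha')
    have h1 : small.card * (k - 1) ≤ ∑ C ∈ small, ∑ v ∈ ct C, cnt v := by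
      have := Finset.card_nsmul_le_sum small (fun C => ∑ v ∈ ct C, cnt v) (k - 1)
        (fun C hC => hpc C (Finset.mem_filter.mp hC).1 (Finset.mem_filter.mp hC).2)
      rw [smul_eq_mul] at this
      exact this
    have h2 : ∑ C ∈ small, ∑ v ∈ ct C, cnt v = ∑ v ∈ small.biUnion ct, cnt v :=
      (Finset.sum_biUnion hdisjc).symm
    have h3 : small.biUnion ct ⊆ ct B := by
      intro v hv
      obtain ⟨C, hC, hvC⟩ := Finset.mem_biUnion.mp hv
      exact mem_ct.mpr ((mem_compFinset.mp (Finset.mem_filter.mp hC).1).2.1 (mem_ct.mp hvC))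
    have h4 : ∑ v ∈ small.biUnion ct, cnt v ≤ ∑ v ∈ ct B, cnt v :=
      Finset.sum_le_sum_of_subset h3
    have h5 : small.card * (k - 1) ≤ t * (k - 1) + (k - 2) := by omega
    have h6 : small.card * (k - 1) < (t + 1) * (k - 1) := by
      have : (t + 1) * (k - 1) = t * (k - 1) + (k - 1) := by ring
      omega
    have := Nat.lt_of_mul_lt_mul_right h6
    omega
  -- big components
  have hbigcard : big.card * k ≤ n - 1 - t := by
    have h1 : big.card * k ≤ ∑ C ∈ big, C.ncard := by
      have := Finset.card_nsmul_le_sum big (fun C => C.ncard) k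
        (fun C hC => not_lt.mp (Finset.mem_filter.mp hC).2)
      rw [smul_eq_mul] at this
      exact this
    have h2 : ∑ C ∈ big, C.ncard ≤ ∑ C ∈ cps, C.ncard :=
      Finset.sum_le_sum_of_subset (Finset.filter_subset _ _)
    have h3 : ∑ C ∈ cps, C.ncard = B.ncard := sum_ncard_comps B
    omega
  have hcpscard : small.card + big.card = cps.card :=
    Finset.card_filter_add_card_filter_not _
  have hqle : qq Gᶜ B ≤ cps.card :=
    Finset.card_le_card (Finset.filter_subset _ _)
  -- the integer bound  k * (qq - t) ≤ n - 1 - t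
  have hkey : (k : ℤ) * ((qq Gᶜ B : ℤ) - t) ≤ (n : ℤ) - 1 - t := by
    have e1 : (qq Gᶜ B : ℤ) ≤ (small.card : ℤ) + big.card := by exact_mod_cast hqle.trans_eq hcpscard.symm
    have e2 : (small.card : ℤ) ≤ t := by exact_mod_cast hsmallcard
    have e3 : (big.card : ℤ) * k ≤ (n : ℤ) - 1 - t := by
      have : ((big.card * k : ℕ) : ℤ) ≤ ((n - 1 - t : ℕ) : ℤ) := by exact_mod_cast hbigcard
      push_cast at this
      omega
    nlinarith [hk2, e1, e2, e3]
  -- build the subgraph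
  have Mle : M ≤ Gᶜ := hle.trans rg_le
  have hsuppA : M.support ⊆ A := support_subset_region hle
  refine ⟨⟨M.support, M.Adj, fun h => Mle h, fun h => ⟨_, h⟩, M.symm⟩, ?_, ?_, ?_⟩
  · intro v hv
    obtain ⟨w, hw⟩ := hv
    exact ⟨w, hw, fun y hy => hMG v hy hw⟩
  · intro hxm
    exact hsuppA hxm rfl
  · -- the numeric bound
    show (n : ℝ) - (n : ℝ) / ((n : ℝ) - r) - 3 ≤ (M.support.ncard : ℝ)
    have hKr : (n : ℝ) - r = (k : ℝ) := by
      rw [hk]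
      push_cast [Nat.cast_sub (by omega : r ≤ n)]
      ring
    rw [hKr]
    have hKpos : (0 : ℝ) < (k : ℝ) := by positivity
    set cov := M.support.ncard with hcov
    have hb1 : ((n : ℤ) - 1) - cov ≤ (qq Gᶜ B : ℤ) - t := by
      have : ((A.ncard : ℤ)) = (n : ℤ) - 1 := by
        rw [hAcard]
        push_cast
        omega
      rw [this] at hbound
      exact hbound
    -- real versions
    have hb1R : ((n : ℝ) - 1) - (cov : ℝ) ≤ (qq Gᶜ B : ℝ) - (t : ℝ) := by exact_mod_cast hb1
    have hkeyR : (k : ℝ) * ((qq Gᶜ B : ℝ) - (t : ℝ)) ≤ (n : ℝ) - 1 - t := by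
      exact_mod_cast hkey
    have hQle : (qq Gᶜ B : ℝ) - (t : ℝ) ≤ ((n : ℝ) - 1) / k := by
      rw [le_div_iff₀ hKpos]
      nlinarith [hkeyR]
    have h1k : (0:ℝ) < 1 / k := by positivity
    have hnk : ((n:ℝ) - 1) / k = (n:ℝ)/k - 1/k := by ring
    nlinarith [hb1R, hQle, h1k]
end

section
/- For all τ, p ∈ (0,1) there exists ε₀ with 0 < ε₀ ≤ τ such that for every ε ∈ (0,ε₀] there exists n₀ ∈ ℕ for which the following holds: every lower-(p,ε)-regular graph G on n ≥ n₀ vertices is a robust (ε,τ)-expander. -/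
open Finset in
lemma pair_count_le {V : Type*} [Fintype V] (G : SimpleGraph V) (A B S : Set V) (c : ℝ)
    (hB : B ⊆ S)
    (hA : ∀ v ∈ A, ((S ∩ G.neighborSet v).ncard : ℝ) ≤ c) :
    ({q : V × V | q.1 ∈ A ∧ q.2 ∈ B ∧ G.Adj q.1 q.2}.ncard : ℝ) ≤ (A.ncard : ℝ) * c := by
  classical
  set F : Finset (V × V) :=
    A.toFinset.biUnion (fun v => {v} ×ˢ (S ∩ G.neighborSet v).toFinset) with hF
  have hsub : {q : V × V | q.1 ∈ A ∧ q.2 ∈ B ∧ G.Adj q.1 q.2} ⊆ ↑F := by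
    rintro ⟨a, b⟩ ⟨ha, hb, hadj⟩
    simp only [hF, Finset.coe_biUnion, Set.mem_iUnion, Finset.mem_coe, Finset.mem_product,
      Finset.mem_singleton, Set.mem_toFinset, Set.mem_inter_iff, SimpleGraph.mem_neighborSet]
    exact ⟨a, ha, rfl, hB hb, hadj⟩
  have h1 : {q : V × V | q.1 ∈ A ∧ q.2 ∈ B ∧ G.Adj q.1 q.2}.ncard ≤ F.card := by
    rw [← Set.ncard_coe_finset]
    exact Set.ncard_le_ncard hsub F.finite_toSet
  have h2 : (F.card : ℝ) ≤ (A.ncard : ℝ) * c := by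
    have hb : (F.card : ℝ) ≤ ∑ v ∈ A.toFinset, ((({v} ×ˢ (S ∩ G.neighborSet v).toFinset).card : ℝ)) := by
      exact_mod_cast Finset.card_biUnion_le
    refine hb.trans ?_
    have hpt : ∀ v ∈ A.toFinset, ((({v} ×ˢ (S ∩ G.neighborSet v).toFinset).card : ℝ)) ≤ c := by
      intro v hv
      rw [Finset.card_product, Finset.card_singleton, one_mul, ← Set.ncard_eq_toFinset_card']
      exact hA v (by simpa using hv)
    calc ∑ v ∈ A.toFinset, ((({v} ×ˢ (S ∩ G.neighborSet v).toFinset).card : ℝ))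
        ≤ ∑ _v ∈ A.toFinset, c := Finset.sum_le_sum hpt
      _ = (A.toFinset.card : ℝ) * c := by rw [Finset.sum_const, nsmul_eq_mul]
      _ = (A.ncard : ℝ) * c := by rw [Set.ncard_eq_toFinset_card']
  calc ({q : V × V | q.1 ∈ A ∧ q.2 ∈ B ∧ G.Adj q.1 q.2}.ncard : ℝ) ≤ (F.card : ℝ) := by
        exact_mod_cast h1
    _ ≤ _ := h2

/-- `G` is a robust (ν,τ)-expander. -/
def RobustExpander {V : Type*} [Fintype V] (G : SimpleGraph V) (ν τ : ℝ) : Prop :=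
  ∀ S : Set V,
    τ * (Fintype.card V : ℝ) ≤ (S.ncard : ℝ) →
    (S.ncard : ℝ) ≤ (1 - τ) * (Fintype.card V : ℝ) →
    (S.ncard : ℝ) + ν * (Fintype.card V : ℝ) ≤
      (({v : V | ν * (Fintype.card V : ℝ) ≤ ((S ∩ G.neighborSet v).ncard : ℝ)}.ncard) : ℝ)

/-- `G` is lower-(p,ε)-regular: `e_G(S,T) ≥ (p-ε)|S||T|` for all disjoint
`S, T ⊆ V(G)` with `|S|, |T| ≥ εn`. -/
def LowerRegular {V : Type*} [Fintype V] (G : SimpleGraph V) (p ε : ℝ) : Prop :=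
  ∀ S T : Set V, Disjoint S T →
    ε * (Fintype.card V : ℝ) ≤ (S.ncard : ℝ) →
    ε * (Fintype.card V : ℝ) ≤ (T.ncard : ℝ) →
    (p - ε) * (S.ncard : ℝ) * (T.ncard : ℝ) ≤
      (({q : V × V | q.1 ∈ S ∧ q.2 ∈ T ∧ G.Adj q.1 q.2}.ncard) : ℝ)

set_option maxHeartbeats 2000000 in
/-- Glock–Kühn–Osthus. -/
theorem lower_regular_is_robust_expander :
    ∀ τ p : ℝ, 0 < τ → τ < 1 → 0 < p → p < 1 →
    ∃ ε₀ : ℝ, 0 < ε₀ ∧ ε₀ ≤ τ ∧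
      ∀ ε : ℝ, 0 < ε → ε ≤ ε₀ →
        ∃ n₀ : ℕ, ∀ (V : Type) [Fintype V] (G : SimpleGraph V),
          n₀ ≤ Fintype.card V →
          LowerRegular G p ε →
          RobustExpander G ε τ := by
  intro τ p hτ hτ1 hp hp1
  refine ⟨p * τ / 8, by positivity, by nlinarith, ?_⟩
  intro ε hε hεle
  refine ⟨⌈3 / τ⌉₊ + 1, ?_⟩
  intro V _ G hn hreg
  intro S hS1 hS2
  classical
  set n : ℝ := (Fintype.card V : ℝ) with hndef
  have hεp : ε ≤ p / 8 := by nlinarith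
  have hε8 : ε ≤ τ / 8 := by nlinarith
  have hpε : 0 < p - ε := by nlinarith
  have hnceil : (3 / τ : ℝ) ≤ n := by
    have h1 : (⌈3 / τ⌉₊ : ℝ) ≤ n := by
      rw [hndef]; exact_mod_cast Nat.le_of_succ_le hn
    exact le_trans (Nat.le_ceil _) h1
  have hn3 : 3 ≤ τ * n := by
    rw [div_le_iff₀ hτ] at hnceil; linarith [hnceil]
  have hnpos : 0 < n := by nlinarith
  have hεnpos : 0 < ε * n := by positivity
  -- the bad set
  set Tb : Set V := {v : V | ((S ∩ G.neighborSet v).ncard : ℝ) < ε * n} with hTb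
  set T₁ : Set V := S ∩ Tb with hT₁def
  set T₂ : Set V := Tb \ S with hT₂def
  -- Step (a) : T₂ is small
  have stepA : (T₂.ncard : ℝ) < ε * n := by
    by_contra hcon
    push_neg at hcon
    have hd : Disjoint T₂ S := Set.disjoint_sdiff_left
    have hSε : ε * n ≤ (S.ncard : ℝ) := le_trans (by nlinarith) hS1
    have hr := hreg T₂ S hd hcon hSε
    have hc := pair_count_le G T₂ S S (ε * n) (le_refl _)
      (fun v hv => le_of_lt hv.1)
    have hT₂pos : 0 < (T₂.ncard : ℝ) := lt_of_lt_of_le hεnpos hcon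
    have h' : (T₂.ncard : ℝ) * ((p - ε) * S.ncard) ≤ (T₂.ncard : ℝ) * (ε * n) := by
      linarith [hr.trans hc]
    have h'' : (p - ε) * (S.ncard : ℝ) ≤ ε * n := le_of_mul_le_mul_left h' hT₂pos
    nlinarith [mul_le_mul_of_nonneg_left hS1 hpε.le]
  -- Step (c) : T₁ is small
  have stepC : (T₁.ncard : ℝ) < ε * n := by
    by_contra hcon
    push_neg at hcon
    -- Step (b) : S \ Tb is small
    set X : Set V := S \ Tb with hXdef
    have hT₁sub : T₁ ⊆ S := Set.inter_subset_left
    have hXb : (X.ncard : ℝ) * p ≤ 2 * (ε * n) := by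
      rcases lt_or_ge ((X.ncard : ℝ)) (ε * n) with h | h
      · nlinarith [Nat.cast_nonneg (α := ℝ) X.ncard]
      · have hd : Disjoint T₁ X := by
          rw [Set.disjoint_left]
          rintro a ⟨-, haT⟩ ⟨-, hta⟩
          exact hta haT
        have hr := hreg T₁ X hd hcon h
        have hc := pair_count_le G T₁ X S (ε * n) Set.diff_subset
          (fun v hv => le_of_lt hv.2)
        have hT₁pos : 0 < (T₁.ncard : ℝ) := lt_of_lt_of_le hεnpos hcon
        have h' : (T₁.ncard : ℝ) * ((p - ε) * X.ncard) ≤ (T₁.ncard : ℝ) * (ε * n) := by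
          linarith [hr.trans hc]
        have h'' : (p - ε) * (X.ncard : ℝ) ≤ ε * n := le_of_mul_le_mul_left h' hT₁pos
        nlinarith [h, hεnpos]
    have hScard : (T₁.ncard : ℝ) + (X.ncard : ℝ) = (S.ncard : ℝ) := by
      exact_mod_cast congrArg (Nat.cast : ℕ → ℝ)
        (Set.ncard_inter_add_ncard_diff_eq_ncard S Tb (Set.toFinite S))
    -- choose A ⊆ T₁ of size ⌈εn⌉
    have hceil : ⌈ε * n⌉₊ ≤ T₁.ncard := by
      rw [Nat.ceil_le]; exact hcon
    obtain ⟨A, hAsub, hAcard⟩ := Set.exists_subset_card_eq hceil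
    have hAr1 : ε * n ≤ (A.ncard : ℝ) := by rw [hAcard]; exact Nat.le_ceil _
    have hAr2 : (A.ncard : ℝ) ≤ ε * n + 1 := by
      rw [hAcard]
      have := Nat.ceil_lt_add_one (show (0:ℝ) ≤ ε * n by positivity)
      linarith
    set B : Set V := T₁ \ A with hBdef
    have hBcard : (B.ncard : ℝ) + (A.ncard : ℝ) = (T₁.ncard : ℝ) := by
      exact_mod_cast congrArg (Nat.cast : ℕ → ℝ)
        (Set.ncard_diff_add_ncard_of_subset hAsub (Set.toFinite T₁))
    have hXdiv : (X.ncard : ℝ) ≤ 2 * (ε * n) / p := by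
      rw [le_div_iff₀ hp]; linarith [hXb]
    have h4 : 2 * (ε * n) / p ≤ τ * n / 4 := by
      rw [div_le_iff₀ hp]; nlinarith
    have hεn8 : ε * n ≤ τ * n / 8 :=
      le_trans (mul_le_mul_of_nonneg_right hε8 hnpos.le) (by linarith [mul_nonneg hτ.le hnpos.le])
    have hBge : ε * n ≤ (B.ncard : ℝ) := by
      have h13 : (1:ℝ) ≤ τ * n / 3 := by linarith
      linarith [hS1, hScard, hBcard, hAr2, hXdiv.trans h4, hεn8]
    have hd : Disjoint A B := Set.disjoint_sdiff_right
    have hr := hreg A B hd hAr1 hBge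
    have hc := pair_count_le G A B S (ε * n)
      ((Set.diff_subset).trans hT₁sub)
      (fun v hv => le_of_lt (hAsub hv).2)
    have hApos : 0 < (A.ncard : ℝ) := lt_of_lt_of_le hεnpos hAr1
    have h' : (A.ncard : ℝ) * ((p - ε) * B.ncard) ≤ (A.ncard : ℝ) * (ε * n) := by
      linarith [hr.trans hc]
    have h'' : (p - ε) * (B.ncard : ℝ) ≤ ε * n := le_of_mul_le_mul_left h' hApos
    have hpB : p * (B.ncard : ℝ) ≤ 2 * (ε * n) := by
      have hBpos : (0:ℝ) ≤ (B.ncard : ℝ) := Nat.cast_nonneg _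
      nlinarith [mul_le_mul_of_nonneg_left hεp hBpos]
    -- final contradiction
    have hptn : 0 < p * (τ * n) := by positivity
    have hE : ε * n ≤ p * (τ * n) / 8 := by
      have := mul_le_mul_of_nonneg_right hεle hnpos.le
      linarith
    have hp3 : p ≤ p * (τ * n) / 3 := by
      have := mul_nonneg hp.le (show (0:ℝ) ≤ τ * n - 3 by linarith)
      nlinarith
    have hpS : p * (τ * n) ≤ p * (S.ncard : ℝ) := mul_le_mul_of_nonneg_left hS1 hp.le
    have hpA : p * (A.ncard : ℝ) ≤ ε * n + p := by
      have h1 : p * (A.ncard : ℝ) ≤ p * (ε * n + 1) := mul_le_mul_of_nonneg_left hAr2 hp.le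
      have h2 : p * (ε * n) ≤ ε * n := mul_le_of_le_one_left hεnpos.le hp1.le
      nlinarith
    have hsplit1 : p * (S.ncard : ℝ) = p * (T₁.ncard : ℝ) + p * (X.ncard : ℝ) := by
      rw [← hScard]; ring
    have hsplit2 : p * (T₁.ncard : ℝ) = p * (B.ncard : ℝ) + p * (A.ncard : ℝ) := by
      rw [← hBcard]; ring
    have hpX : p * (X.ncard : ℝ) ≤ 2 * (ε * n) := by linarith [hXb]
    linarith [hE, hp3, hpS, hpA, hsplit1, hsplit2, hpX, hpB]
  -- Step (d) : conclude
  have hsetEq : {v : V | ε * n ≤ ((S ∩ G.neighborSet v).ncard : ℝ)} = Tbᶜ := by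
    ext v; simp [hTb, not_lt]
  have hTbsub : Tb ⊆ T₁ ∪ T₂ := by
    intro v hv
    by_cases h : v ∈ S
    · exact Or.inl ⟨h, hv⟩
    · exact Or.inr ⟨hv, h⟩
  have hTbcard : (Tb.ncard : ℝ) ≤ (T₁.ncard : ℝ) + (T₂.ncard : ℝ) := by
    have h1 : Tb.ncard ≤ (T₁ ∪ T₂).ncard :=
      Set.ncard_le_ncard hTbsub (Set.toFinite _)
    have h2 : (T₁ ∪ T₂).ncard ≤ T₁.ncard + T₂.ncard := Set.ncard_union_le _ _
    exact_mod_cast h1.trans h2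
  have hcompl : (Tb.ncard : ℝ) + (Tbᶜ.ncard : ℝ) = n := by
    rw [hndef]
    exact_mod_cast congrArg (Nat.cast : ℕ → ℝ)
      ((Set.ncard_add_ncard_compl Tb).trans Nat.card_eq_fintype_card)
  rw [hsetEq]
  have : 3 * (ε * n) ≤ τ * n := by nlinarith
  linarith [hS2, stepA, stepC, hTbcard, hcompl]
end

section
/- Suppose 0 < ν ≤ τ ≤ ε < 1 are real numbers with ε ≥ 4ν/τ. Let G be a finite simple graph on n vertices with minimum degree δ(G) ≥ (1+ε)n/2. Then G is a robust (ν,τ)-expander. -/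
/-- The minimum degree δ(G). -/
noncomputable def minDeg {V : Type*} (G : SimpleGraph V) : ℕ :=
  sInf (Set.range (degr G))

open Classical in
lemma degr_eq_degree {V : Type*} [Fintype V] (G : SimpleGraph V) (v : V) :
    degr G v = G.degree v := by
  rw [degr, ← Nat.card_coe_set_eq, Nat.card_eq_fintype_card,
    G.card_neighborSet_eq_degree]

open Classical in
lemma ncard_inter_eq_sum {V : Type*} [Fintype V] (S : Set V) (v : V) (G : SimpleGraph V) :
    (S ∩ G.neighborSet v).ncard = ∑ u ∈ S.toFinset, if G.Adj v u then 1 else 0 := by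
  rw [Set.ncard_eq_toFinset_card', ← Finset.card_filter]
  congr 1
  ext u
  simp [Set.mem_toFinset, SimpleGraph.mem_neighborSet]

/-- Kühn–Osthus. -/
theorem large_min_degree_is_robust_expander
    (V : Type*) [Fintype V] (G : SimpleGraph V) (ν τ ε : ℝ)
    (hν : 0 < ν) (hντ : ν ≤ τ) (hτε : τ ≤ ε) (hε : ε < 1)
    (hratio : 4 * ν / τ ≤ ε)
    (hδ : (1 + ε) * (Fintype.card V : ℝ) / 2 ≤ (minDeg G : ℝ)) :
    RobustExpander G ν τ := by
  classical
  intro S hS1 hS2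
  set n := Fintype.card V with hn
  set RN := {v : V | ν * (n : ℝ) ≤ ((S ∩ G.neighborSet v).ncard : ℝ)} with hRN
  have hτ0 : 0 < τ := lt_of_lt_of_le hν hντ
  have hε0 : 0 < ε := lt_of_lt_of_le hτ0 hτε
  have h4ν : 4 * ν ≤ ε * τ := by
    rw [div_le_iff₀ hτ0] at hratio; linarith
  have hνε4 : ν ≤ ε / 4 := by nlinarith
  -- every vertex has large degree
  have hdeg : ∀ v : V, (1 + ε) * (n : ℝ) / 2 ≤ (G.degree v : ℝ) := by
    intro v
    refine le_trans hδ ?_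
    have h1 : minDeg G ≤ degr G v := Nat.sInf_le ⟨v, rfl⟩
    have := degr_eq_degree G v
    exact_mod_cast this ▸ h1
  rcases Nat.eq_zero_or_pos n with h0 | hpos
  · -- degenerate case n = 0
    have hS0 : S.ncard = 0 := by
      have := Set.ncard_le_ncard (Set.subset_univ S) (Set.toFinite _)
      rw [Set.ncard_univ, Nat.card_eq_fintype_card] at this
      omega
    rw [hS0, h0]
    push_cast
    simp only [mul_zero, add_zero]
    positivity
  have hnpos : (0 : ℝ) < n := by exact_mod_cast hpos
  have hSpos : (0 : ℝ) < S.ncard := lt_of_lt_of_le (by positivity) hS1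
  have hScard : S.toFinset.card = S.ncard := (Set.ncard_eq_toFinset_card' S).symm
  -- size of any set is at most n
  have hle_n : ∀ T : Set V, (T.ncard : ℝ) ≤ n := by
    intro T
    have := Set.ncard_le_ncard (Set.subset_univ T) (Set.toFinite _)
    rw [Set.ncard_univ, Nat.card_eq_fintype_card] at this
    exact_mod_cast this
  rcases le_or_gt ((S.ncard : ℝ)) ((n : ℝ) / 2) with hhalf | hhalf
  · -- case |S| ≤ n/2 : proof by contradiction using double counting
    by_contra hcon
    push_neg at hcon
    -- double counting identity
    have key : ∑ v : V, (S ∩ G.neighborSet v).ncard = ∑ u ∈ S.toFinset, G.degree u := by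
      have : ∀ v, (S ∩ G.neighborSet v).ncard
          = ∑ u ∈ S.toFinset, if G.Adj v u then 1 else 0 :=
        fun v => ncard_inter_eq_sum S v G
      simp_rw [this]
      rw [Finset.sum_comm]
      refine Finset.sum_congr rfl fun u _ => ?_
      have : ∀ v : V, (if G.Adj v u then (1:ℕ) else 0) = if G.Adj u v then 1 else 0 := by
        intro v; simp [SimpleGraph.adj_comm]
      simp_rw [this, ← Finset.card_filter]
      rw [SimpleGraph.degree]
      congr 1
      ext v
      simp [SimpleGraph.mem_neighborFinset]
    -- lower bound for the RHS
    have lower : (S.ncard : ℝ) * ((1 + ε) * n / 2) ≤ ∑ u ∈ S.toFinset, (G.degree u : ℝ) := by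
      calc (S.ncard : ℝ) * ((1 + ε) * n / 2)
          = ∑ _u ∈ S.toFinset, ((1 + ε) * n / 2) := by
            rw [Finset.sum_const, hScard, nsmul_eq_mul]
        _ ≤ ∑ u ∈ S.toFinset, (G.degree u : ℝ) :=
            Finset.sum_le_sum fun u _ => hdeg u
    -- upper bound for the LHS
    have hRNcard : RN.toFinset.card = RN.ncard := (Set.ncard_eq_toFinset_card' RN).symm
    have upper : ∑ v : V, ((S ∩ G.neighborSet v).ncard : ℝ)
        ≤ (RN.ncard : ℝ) * S.ncard + (n : ℝ) * (ν * n) := by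
      rw [← Finset.sum_add_sum_compl RN.toFinset]
      have h1 : ∑ v ∈ RN.toFinset, ((S ∩ G.neighborSet v).ncard : ℝ)
          ≤ (RN.ncard : ℝ) * S.ncard := by
        calc ∑ v ∈ RN.toFinset, ((S ∩ G.neighborSet v).ncard : ℝ)
            ≤ ∑ _v ∈ RN.toFinset, (S.ncard : ℝ) := by
              refine Finset.sum_le_sum fun v _ => ?_
              exact_mod_cast Nat.cast_le.mpr
                (Set.ncard_le_ncard (Set.inter_subset_left) (Set.toFinite _))
          _ = (RN.ncard : ℝ) * S.ncard := by
              rw [Finset.sum_const, hRNcard, nsmul_eq_mul]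
      have h2 : ∑ v ∈ RN.toFinsetᶜ, ((S ∩ G.neighborSet v).ncard : ℝ)
          ≤ (n : ℝ) * (ν * n) := by
        calc ∑ v ∈ RN.toFinsetᶜ, ((S ∩ G.neighborSet v).ncard : ℝ)
            ≤ ∑ _v ∈ RN.toFinsetᶜ, (ν * n) := by
              refine Finset.sum_le_sum fun v hv => ?_
              have : v ∉ RN := by
                simpa [Set.mem_toFinset] using Finset.mem_compl.mp hv
              have : ¬ (ν * (n : ℝ) ≤ ((S ∩ G.neighborSet v).ncard : ℝ)) := this
              linarith [not_le.mp this]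
          _ = (RN.toFinsetᶜ.card : ℝ) * (ν * n) := by
              rw [Finset.sum_const, nsmul_eq_mul]
          _ ≤ (n : ℝ) * (ν * n) := by
              have : RN.toFinsetᶜ.card ≤ n := le_trans (Finset.card_le_univ _) (le_of_eq rfl)
              have hν' : 0 ≤ ν * (n : ℝ) := by positivity
              exact mul_le_mul_of_nonneg_right (by exact_mod_cast this) hν'
      linarith
    -- combine
    have keyR : ∑ v : V, ((S ∩ G.neighborSet v).ncard : ℝ)
        = ∑ u ∈ S.toFinset, (G.degree u : ℝ) := by
      exact_mod_cast congrArg (fun m : ℕ => (m : ℝ)) key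
    have main : (S.ncard : ℝ) * ((1 + ε) * n / 2)
        ≤ (RN.ncard : ℝ) * S.ncard + (n : ℝ) * (ν * n) := by
      rw [← keyR] at lower; linarith
    -- derive numeric contradiction
    have hτn : τ * (n : ℝ) ≤ S.ncard := hS1
    have hνn : ν * (n : ℝ) ≤ (ε / 4) * S.ncard := by nlinarith
    nlinarith [mul_pos hSpos hnpos, mul_pos hε0 (mul_pos hSpos hnpos),
      mul_le_mul_of_nonneg_right hcon.le hSpos.le]
  · -- case |S| > n/2 : every vertex is in RN
    have hall : RN = Set.univ := by
      ext v
      simp only [Set.mem_univ, iff_true, hRN, Set.mem_setOf_eq]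
      have hdv := hdeg v
      have hunion : ((S ∪ G.neighborSet v).ncard : ℝ) ≤ n := hle_n _
      have hie : (S ∩ G.neighborSet v).ncard + (S ∪ G.neighborSet v).ncard
          = S.ncard + (G.neighborSet v).ncard :=
        Set.ncard_inter_add_ncard_union S _ (Set.toFinite _) (Set.toFinite _)
      have hieR : ((S ∩ G.neighborSet v).ncard : ℝ) + ((S ∪ G.neighborSet v).ncard : ℝ)
          = (S.ncard : ℝ) + ((G.neighborSet v).ncard : ℝ) := by exact_mod_cast hie
      have hdegr : ((G.neighborSet v).ncard : ℝ) = (G.degree v : ℝ) := by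
        exact_mod_cast congrArg (fun m : ℕ => (m : ℝ)) (degr_eq_degree G v)
      nlinarith
    rw [hall, Set.ncard_univ, Nat.card_eq_fintype_card, ← hn]
    have := mul_le_mul_of_nonneg_right hντ hnpos.le
    linarith
end

section
/- Let G be a finite simple graph on n ≥ 1 vertices such that any two distinct vertices of degree less than Δ(G) are adjacent in G. Then more than n/2 vertices of G have degree Δ(G), where Δ(G) denotes the maximum degree of G. -/
/-- The maximum degree Δ(G). -/
noncomputable def maxDeg {V : Type*} (G : SimpleGraph V) : ℕ :=
  sSup (Set.range (degr G))

/-- Plantholt–Shan. -/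
theorem many_max_degree_vertices
    (V : Type*) [Fintype V] [Nonempty V] (G : SimpleGraph V)
    (h : ∀ v w : V, v ≠ w → degr G v < maxDeg G → degr G w < maxDeg G → G.Adj v w) :
    (Fintype.card V : ℝ) / 2 < ({v : V | degr G v = maxDeg G}.ncard : ℝ) := by
  classical
  have hdeg : ∀ v, degr G v = G.degree v := by
    intro v
    rw [degr, Set.ncard_eq_toFinset_card']
    rfl
  have hbdd : BddAbove (Set.range (degr G)) := (Set.finite_range _).bddAbove
  have hle : ∀ v, degr G v ≤ maxDeg G := fun v => le_csSup hbdd ⟨v, rfl⟩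
  have hmem : maxDeg G ∈ Set.range (degr G) :=
    Set.Nonempty.csSup_mem (Set.range_nonempty _) (Set.finite_range _)
  obtain ⟨u0, hu0⟩ := hmem
  set S : Finset V := Finset.univ.filter (fun v => degr G v < maxDeg G) with hS
  set M : Finset V := Finset.univ.filter (fun v => ¬ degr G v < maxDeg G) with hM
  have hSM : S.card + M.card = Fintype.card V :=
    Finset.card_filter_add_card_filter_not _
  have hsetM : {v : V | degr G v = maxDeg G} = (M : Set V) := by
    ext v
    have := hle v
    simp only [hM, Finset.coe_filter, Finset.mem_univ, true_and, Set.mem_setOf_eq]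
    omega
  rw [hsetM, Set.ncard_coe_finset]
  have hu0M : u0 ∈ M := by simp [hM, hu0]
  have hm1 : 1 ≤ M.card := Finset.card_pos.2 ⟨u0, hu0M⟩
  -- key claim : S.card < M.card
  have hkey : S.card < M.card := by
    by_contra hcon
    push_neg at hcon
    -- neighbours in S and in M
    set A : V → Finset V := fun v => (G.neighborFinset v).filter (fun w => degr G w < maxDeg G)
      with hA
    set B : V → Finset V := fun v => (G.neighborFinset v).filter (fun w => ¬ degr G w < maxDeg G)
      with hB
    have hABdeg : ∀ v, (A v).card + (B v).card = G.degree v := fun v =>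
      Finset.card_filter_add_card_filter_not _
    -- double counting
    have hswap : ∑ u ∈ M, (A u).card = ∑ v ∈ S, (B v).card := by
      have hAcard : ∀ u, (A u).card = ∑ v ∈ S, (if G.Adj u v then 1 else 0) := by
        intro u
        rw [← Finset.card_filter]
        congr 1
        ext w
        simp [hA, hS, SimpleGraph.mem_neighborFinset, and_comm]
      have hBcard : ∀ v, (B v).card = ∑ u ∈ M, (if G.Adj u v then 1 else 0) := by
        intro v
        rw [← Finset.card_filter]
        congr 1
        ext w
        simp only [hB, hM, SimpleGraph.mem_neighborFinset, Finset.mem_filter,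
          Finset.mem_univ, true_and]
        rw [G.adj_comm]
        tauto
      simp only [hAcard, hBcard]
      exact Finset.sum_comm
    -- abbreviations in ℤ
    set D : ℤ := (maxDeg G : ℤ) with hDdef
    set k : ℤ := (S.card : ℤ) with hkdef
    set m : ℤ := (M.card : ℤ) with hmdef
    have hm1' : (1 : ℤ) ≤ m := by rw [hmdef]; exact_mod_cast hm1
    have hcon' : m ≤ k := by rw [hmdef, hkdef]; exact_mod_cast hcon
    have hD : D ≤ k + m - 1 := by
      have h1 : G.degree u0 < Fintype.card V := G.degree_lt_card_verts u0
      have h2 : maxDeg G = G.degree u0 := by rw [← hu0, hdeg]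
      have : (maxDeg G : ℤ) < (Fintype.card V : ℤ) := by exact_mod_cast h2 ▸ h1
      rw [← hSM] at this
      push_cast at this
      rw [hDdef, hkdef, hmdef]
      linarith
    -- lower bound for vertices in M
    have h1 : m * (D - m + 1) ≤ ∑ u ∈ M, ((A u).card : ℤ) := by
      have hpt : ∀ u ∈ M, D - m + 1 ≤ ((A u).card : ℤ) := by
        intro u hu
        have hdu : degr G u = maxDeg G := by
          have := hle u
          have := (Finset.mem_filter.1 hu).2
          omega
        have hBsub : B u ⊆ M.erase u := by
          intro w hw
          simp only [hB, Finset.mem_filter, SimpleGraph.mem_neighborFinset] at hw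
          refine Finset.mem_erase.2 ⟨fun hwu => G.loopless.irrefl u (hwu ▸ hw.1), ?_⟩
          simp only [hM, Finset.mem_filter, Finset.mem_univ, true_and]
          exact hw.2
        have hBle : (B u).card ≤ M.card - 1 := by
          have := Finset.card_le_card hBsub
          rwa [Finset.card_erase_of_mem hu] at this
        have hBle' : ((B u).card : ℤ) ≤ m - 1 := by
          have h4 : ((B u).card : ℤ) ≤ ((M.card - 1 : ℕ) : ℤ) := by exact_mod_cast hBle
          rw [Nat.cast_sub hm1] at h4
          rw [hmdef]; exact_mod_cast h4
        have heq : ((A u).card : ℤ) + ((B u).card : ℤ) = D := by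
          have h5 := hABdeg u
          rw [← hdeg, hdu] at h5
          rw [hDdef]; exact_mod_cast h5
        linarith
      calc m * (D - m + 1) = ∑ _u ∈ M, (D - m + 1) := by
            rw [Finset.sum_const, nsmul_eq_mul]
        _ ≤ ∑ u ∈ M, ((A u).card : ℤ) := Finset.sum_le_sum hpt
    -- upper bound for vertices in S
    have h2 : ∑ v ∈ S, ((B v).card : ℤ) ≤ k * (D - k) := by
      have hpt : ∀ v ∈ S, ((B v).card : ℤ) ≤ D - k := by
        intro v hv
        have hdv : degr G v < maxDeg G := (Finset.mem_filter.1 hv).2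
        have hAsub : S.erase v ⊆ A v := by
          intro w hw
          obtain ⟨hwv, hwS⟩ := Finset.mem_erase.1 hw
          have hwS' : degr G w < maxDeg G := (Finset.mem_filter.1 hwS).2
          simp only [hA, Finset.mem_filter, SimpleGraph.mem_neighborFinset]
          exact ⟨h v w (Ne.symm hwv) hdv hwS', hwS'⟩
        have hAge : S.card - 1 ≤ (A v).card := by
          have := Finset.card_le_card hAsub
          rwa [Finset.card_erase_of_mem hv] at this
        have hk1 : 1 ≤ S.card := Finset.card_pos.2 ⟨v, hv⟩
        have hAge' : k - 1 ≤ ((A v).card : ℤ) := by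
          have h4 : ((S.card - 1 : ℕ) : ℤ) ≤ ((A v).card : ℤ) := by exact_mod_cast hAge
          rw [Nat.cast_sub hk1] at h4
          rw [hkdef]; exact_mod_cast h4
        have heq : ((A v).card : ℤ) + ((B v).card : ℤ) ≤ D - 1 := by
          have h3 := hABdeg v
          rw [← hdeg] at h3
          have h6 : ((A v).card + (B v).card : ℕ) < maxDeg G := h3 ▸ hdv
          have h7 : ((A v).card + (B v).card : ℤ) < D := by rw [hDdef]; exact_mod_cast h6
          push_cast at h7 ⊢
          linarith
        linarith
      calc ∑ v ∈ S, ((B v).card : ℤ) ≤ ∑ _v ∈ S, (D - k) := Finset.sum_le_sum hpt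
        _ = k * (D - k) := by rw [Finset.sum_const, nsmul_eq_mul]
    have hswap' : ∑ u ∈ M, ((A u).card : ℤ) = ∑ v ∈ S, ((B v).card : ℤ) := by
      exact_mod_cast congrArg (Nat.cast : ℕ → ℤ) hswap
    have hfinal : m * (D - m + 1) ≤ k * (D - k) := by
      rw [← hswap'] at h2; linarith
    nlinarith [mul_nonneg (by linarith : (0:ℤ) ≤ k - m) (by linarith : (0:ℤ) ≤ k + m - 1 - D)]
  -- conclude
  have : (Fintype.card V : ℝ) = (S.card : ℝ) + (M.card : ℝ) := by exact_mod_cast hSM.symm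
  have hkey' : (S.card : ℝ) < (M.card : ℝ) := by exact_mod_cast hkey
  linarith
end

section
/- Let d₁ ≥ d₂ ≥ … ≥ dₙ ≥ 0 be integers. Then there exists a loopless multigraph on vertices v₁,…,vₙ — that is, a symmetric function m : {1,…,n} × {1,…,n} → ℕ with m(i,i) = 0 for all i, where deg(v_i) = Σ_{j=1}^n m(i,j) — such that deg(v_i) = d_i for all i ∈ [1,n], if and only if Σ_{i=1}^n d_i is even and d₁ ≤ Σ_{i=2}^n d_i. -/
open Finset

/-- Key construction lemma: a symmetric Erdős–Gallai style condition for multigraphs. -/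
lemma multigraph_aux : ∀ (S n : ℕ) (d : Fin n → ℕ), ∑ i, d i = S → Even S →
    (∀ i, 2 * d i ≤ S) →
    ∃ m : Fin n → Fin n → ℕ,
      (∀ i j, m i j = m j i) ∧ (∀ i, m i i = 0) ∧ (∀ i, ∑ j, m i j = d i) := by
  intro S
  induction S using Nat.strong_induction_on with
  | _ S ih =>
    intro n d hS hEven hBnd
    rcases Nat.eq_zero_or_pos S with hS0 | hSpos
    · refine ⟨fun _ _ => 0, fun _ _ => rfl, fun _ => rfl, fun i => ?_⟩
      have := (Finset.sum_eq_zero_iff.mp (hS.trans hS0)) i (mem_univ i)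
      simpa using this.symm
    · -- n > 0
      have hn : 0 < n := by
        rcases Nat.eq_zero_or_pos n with h0 | h; · subst h0; simp at hS; omega
        · exact h
      obtain ⟨a, -, ha⟩ := Finset.exists_max_image (univ : Finset (Fin n)) d ⟨⟨0, hn⟩, mem_univ _⟩
      have hda : 0 < d a := by
        by_contra h
        have : ∀ i ∈ (univ : Finset (Fin n)), d i = 0 := fun i _ => by
          have := ha i (mem_univ i); omega
        have := Finset.sum_eq_zero this
        omega
      have hsplita : d a + ∑ i ∈ univ.erase a, d i = S := by
        rw [Finset.add_sum_erase _ _ (mem_univ a)]; exact hS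
      have herased : ∑ i ∈ univ.erase a, d i ≠ 0 := by
        have := hBnd a; omega
      obtain ⟨b, hbmem, hdb⟩ := Finset.exists_ne_zero_of_sum_ne_zero herased
      have hba : b ≠ a := (Finset.mem_erase.mp hbmem).1
      set d' : Fin n → ℕ := fun i => if i = a then d a - 1 else if i = b then d b - 1 else d i
        with hd'
      have habs : ({a, b} : Finset (Fin n)) ⊆ univ := fun x _ => mem_univ x
      have hpair : ∑ i ∈ ({a, b} : Finset (Fin n)), d i = d a + d b :=
        Finset.sum_pair (Ne.symm hba)
      have hpair' : ∑ i ∈ ({a, b} : Finset (Fin n)), d' i = (d a - 1) + (d b - 1) := by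
        rw [Finset.sum_pair (Ne.symm hba)]
        simp [hd', hba]
      have hoff : ∑ i ∈ univ \ {a, b}, d' i = ∑ i ∈ univ \ {a, b}, d i := by
        apply Finset.sum_congr rfl
        intro i hi
        simp only [Finset.mem_sdiff, Finset.mem_insert, Finset.mem_singleton] at hi
        have hia : i ≠ a := fun h => hi.2 (Or.inl h)
        have hib : i ≠ b := fun h => hi.2 (Or.inr h)
        simp [hd', hia, hib]
      have hsum1 : ∑ i ∈ univ \ {a, b}, d i + ∑ i ∈ ({a, b} : Finset (Fin n)), d i = S := by
        rw [Finset.sum_sdiff habs]; exact hS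
      have hsum2 : ∑ i, d' i + 2 = S := by
        have : ∑ i ∈ univ \ {a, b}, d' i + ∑ i ∈ ({a, b} : Finset (Fin n)), d' i
            = ∑ i, d' i := Finset.sum_sdiff habs
        omega
      obtain ⟨k, hk⟩ := hEven
      have hS2 : 2 ≤ S := by omega
      have hBnd' : ∀ i, 2 * d' i ≤ S - 2 := by
        intro i
        by_cases hia : i = a
        · have := hBnd a; simp [hd', hia]; omega
        · by_cases hib : i = b
          · have := hBnd b
            have hle : d b ≤ d a := ha b (mem_univ b)
            simp [hd', hia, hib, hba]
            omega
          · have htriple : d i + (d a + d b) ≤ S := by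
              have hsub : insert i ({a, b} : Finset (Fin n)) ⊆ univ := fun x _ => mem_univ x
              have hnotin : i ∉ ({a, b} : Finset (Fin n)) := by
                simp [hia, hib]
              have := Finset.sum_le_sum_of_subset (f := d) hsub
              rw [Finset.sum_insert hnotin, hpair] at this
              omega
            have hle : d i ≤ d a := ha i (mem_univ i)
            simp [hd', hia, hib]
            omega
      obtain ⟨m', hsym', hdiag', hdeg'⟩ :=
        ih (S - 2) (by omega) n d' (by omega) ⟨k - 1, by omega⟩ hBnd'
      refine ⟨fun i j => m' i j + (if (i = a ∧ j = b) ∨ (i = b ∧ j = a) then 1 else 0),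
        ?_, ?_, ?_⟩
      · intro i j
        dsimp only
        rw [hsym' i j]
        congr 1
        apply if_congr _ rfl rfl
        tauto
      · intro i
        have hcond : ¬((i = a ∧ i = b) ∨ (i = b ∧ i = a)) := by
          rintro (⟨h1, h2⟩ | ⟨h1, h2⟩) <;> exact hba (h2 ▸ h1 ▸ rfl)
        simp [hdiag' i, hcond]
      · intro i
        dsimp only
        rw [Finset.sum_add_distrib, hdeg' i]
        by_cases hia : i = a
        · have : ∑ j, (if (i = a ∧ j = b) ∨ (i = b ∧ j = a) then 1 else 0) = 1 := by
            have h1 : ∀ j : Fin n,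
                (if (i = a ∧ j = b) ∨ (i = b ∧ j = a) then (1:ℕ) else 0)
                  = if j = b then 1 else 0 := by
              intro j
              apply if_congr _ rfl rfl
              constructor
              · rintro (⟨-, h⟩ | ⟨h, -⟩)
                · exact h
                · exact absurd (hia ▸ h : a = b) (Ne.symm hba)
              · intro h; exact Or.inl ⟨hia, h⟩
            rw [Finset.sum_congr rfl (fun j _ => h1 j)]
            simp
          rw [this]
          simp only [hd', if_pos hia]
          have : d i = d a := by rw [hia]
          omega
        · by_cases hib : i = b
          · have : ∑ j, (if (i = a ∧ j = b) ∨ (i = b ∧ j = a) then 1 else 0) = 1 := by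
              have h1 : ∀ j : Fin n,
                  (if (i = a ∧ j = b) ∨ (i = b ∧ j = a) then (1:ℕ) else 0)
                    = if j = a then 1 else 0 := by
                intro j
                apply if_congr _ rfl rfl
                constructor
                · rintro (⟨h, -⟩ | ⟨-, h⟩)
                  · exact absurd (hib ▸ h : b = a) hba
                  · exact h
                · intro h; exact Or.inr ⟨hib, h⟩
              rw [Finset.sum_congr rfl (fun j _ => h1 j)]
              simp
            rw [this]
            simp only [hd', if_neg hia, if_pos hib]
            have h5 : d i = d b := by rw [hib]
            have : 0 < d b := Nat.pos_of_ne_zero hdb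
            omega
          · have : ∑ j, (if (i = a ∧ j = b) ∨ (i = b ∧ j = a) then (1:ℕ) else 0) = 0 := by
              apply Finset.sum_eq_zero
              intro j _
              have : ¬((i = a ∧ j = b) ∨ (i = b ∧ j = a)) := by tauto
              simp [this]
            rw [this]
            simp [hd', hia, hib]

/-- Hakimi.  A loopless multigraph on `v₁, …, vₙ` is a symmetric
edge-multiplicity function `m` with zero diagonal; the degree of `vᵢ` is `∑ j, m i j`. -/
theorem multigraph_degree_sequence
    (n : ℕ) (hn : 0 < n) (d : Fin n → ℕ)
    (hsorted : ∀ i j : Fin n, i ≤ j → d j ≤ d i) :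
    (∃ m : Fin n → Fin n → ℕ,
        (∀ i j, m i j = m j i) ∧ (∀ i, m i i = 0) ∧ (∀ i, ∑ j, m i j = d i)) ↔
      (Even (∑ i, d i) ∧ d ⟨0, hn⟩ ≤ ∑ i ∈ Finset.univ.erase ⟨0, hn⟩, d i) := by
  constructor
  · rintro ⟨m, hsym, hdiag, hdeg⟩
    constructor
    · -- evenness
      have hStot : ∑ i, d i = ∑ p ∈ (univ ×ˢ univ : Finset (Fin n × Fin n)), m p.1 p.2 := by
        rw [Finset.sum_product]
        exact (Finset.sum_congr rfl (fun i _ => hdeg i)).symm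
      have hsplit := Finset.sum_filter_add_sum_filter_not
        (univ ×ˢ univ : Finset (Fin n × Fin n)) (fun p => p.1 < p.2) (fun p => m p.1 p.2)
      have h2 : ∑ p ∈ (univ ×ˢ univ : Finset (Fin n × Fin n)).filter (fun p => ¬ p.1 < p.2),
            m p.1 p.2
          = ∑ p ∈ (univ ×ˢ univ : Finset (Fin n × Fin n)).filter (fun p => p.2 < p.1),
            m p.1 p.2 := by
        apply (Finset.sum_subset ?_ ?_).symm
        · intro p hp
          rw [Finset.mem_filter] at hp ⊢
          exact ⟨hp.1, not_lt.mpr (le_of_lt hp.2)⟩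
        · intro p hp hnp
          rw [Finset.mem_filter] at hp hnp
          have h12 : p.1 = p.2 := le_antisymm (not_lt.mp (fun h => hnp ⟨hp.1, h⟩)) (not_lt.mp hp.2)
          rw [h12]; exact hdiag p.2
      have h3 : ∑ p ∈ (univ ×ˢ univ : Finset (Fin n × Fin n)).filter (fun p => p.2 < p.1),
            m p.1 p.2
          = ∑ p ∈ (univ ×ˢ univ : Finset (Fin n × Fin n)).filter (fun p => p.1 < p.2),
            m p.1 p.2 := by
        apply Finset.sum_equiv (Equiv.prodComm (Fin n) (Fin n))
        · intro p; simp
        · intro p hp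
          exact hsym p.1 p.2
      refine ⟨∑ p ∈ (univ ×ˢ univ : Finset (Fin n × Fin n)).filter (fun p => p.1 < p.2),
        m p.1 p.2, ?_⟩
      omega
    · -- degree bound
      have h0 : d ⟨0, hn⟩ = ∑ j ∈ univ.erase ⟨0, hn⟩, m ⟨0, hn⟩ j := by
        rw [Finset.sum_erase _ (hdiag ⟨0, hn⟩)]
        exact (hdeg ⟨0, hn⟩).symm
      rw [h0]
      apply Finset.sum_le_sum
      intro j hj
      rw [hsym]
      calc m j ⟨0, hn⟩ ≤ ∑ k, m j k := Finset.single_le_sum (fun k _ => Nat.zero_le _) (mem_univ _)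
        _ = d j := hdeg j
  · rintro ⟨hEven, hDom⟩
    apply multigraph_aux (∑ i, d i) n d rfl hEven
    intro i
    have h0le : (⟨0, hn⟩ : Fin n) ≤ i := by
      rw [Fin.le_def]; exact Nat.zero_le _
    have h1 : d i ≤ d ⟨0, hn⟩ := hsorted _ _ h0le
    have h2 : d ⟨0, hn⟩ + ∑ j ∈ univ.erase ⟨0, hn⟩, d j = ∑ j, d j :=
      Finset.add_sum_erase _ _ (mem_univ _)
    omega
end
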